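/- arXiv:2407.15965 — 3 statements merged into one kernel-verified Lean document; each statement's English description precedes it below -/
import Mathlib

section
/- Let X be a real- or complex-valued random variable, and let β, σ, B > 0 be such that for all s ≥ 0 one has the tail bound ℙ(|X| > s) ≤ β exp( − s² / (σ² + B s) ). Then for every p ≥ 1 the p-th moment of X is bounded by 𝔼(|X|^p)^{1/p} ≤ β^{1/p} √p σ + 2 β^{1/p} p B. -/
open MeasureTheory Real ENNReal Set

noncomputable section


lemma gamma_le_aux {q : ℝ} (hq : 1 ≤ q) :
    Real.Gamma (q + 1) ≤ (2 * q) ^ q := by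
  have hq0 : 0 < q := lt_of_lt_of_le one_pos hq
  have h2q : (0:ℝ) < 2 * q := by linarith
  rw [Real.Gamma_eq_integral (by linarith : (0:ℝ) < q + 1)]
  have hpt : ∀ x ∈ Ioi (0:ℝ),
      Real.exp (-x) * x ^ (q + 1 - 1) ≤ (2*q) ^ q * Real.exp (-q) * Real.exp (-(1/2) * x) := by
    intro x hx
    have hx0 : (0:ℝ) < x := hx
    have hlog : Real.log (x / (2*q)) ≤ x / (2*q) - 1 :=
      Real.log_le_sub_one_of_pos (by positivity)
    have hxq : x ^ (q + 1 - 1) = x ^ q := by norm_num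
    rw [hxq]
    have hx_rpow : x ^ q ≤ (2*q) ^ q * Real.exp (x/2 - q) := by
      have h1 : x ^ q = Real.exp (q * Real.log x) := by
        rw [Real.rpow_def_of_pos hx0, mul_comm]
      have h2 : (2*q) ^ q = Real.exp (q * Real.log (2*q)) := by
        rw [Real.rpow_def_of_pos h2q, mul_comm]
      rw [h1, h2, ← Real.exp_add]
      apply Real.exp_le_exp.mpr
      have : Real.log x - Real.log (2*q) ≤ x/(2*q) - 1 := by
        rw [Real.log_div (ne_of_gt hx0) (ne_of_gt h2q)] at hlog; exact hlog
      have h3 : q * (Real.log x - Real.log (2*q)) ≤ q * (x/(2*q) - 1) :=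
        mul_le_mul_of_nonneg_left this hq0.le
      have h4 : q * (x/(2*q) - 1) = x/2 - q := by field_simp
      nlinarith [h3, h4]
    calc Real.exp (-x) * x ^ q ≤ Real.exp (-x) * ((2*q)^q * Real.exp (x/2 - q)) := by
          exact mul_le_mul_of_nonneg_left hx_rpow (Real.exp_nonneg _)
      _ = (2*q)^q * Real.exp (-q) * Real.exp (-(1/2)*x) := by
          rw [mul_comm (Real.exp (-x)), mul_assoc, ← Real.exp_add, mul_assoc, ← Real.exp_add]
          ring_nf
  have hint1 : IntegrableOn (fun x => Real.exp (-x) * x ^ (q + 1 - 1)) (Ioi (0:ℝ)) :=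
    Real.GammaIntegral_convergent (by linarith)
  have hint2 : IntegrableOn (fun x => (2*q)^q * Real.exp (-q) * Real.exp (-(1/2) * x)) (Ioi (0:ℝ)) :=
    (exp_neg_integrableOn_Ioi 0 (by norm_num : (0:ℝ) < 1/2)).const_mul _
  calc ∫ x in Ioi (0:ℝ), Real.exp (-x) * x ^ (q + 1 - 1)
      ≤ ∫ x in Ioi (0:ℝ), (2*q)^q * Real.exp (-q) * Real.exp (-(1/2) * x) := by
        apply setIntegral_mono_on hint1 hint2 measurableSet_Ioi hpt
    _ = (2*q)^q * Real.exp (-q) * ∫ x in Ioi (0:ℝ), Real.exp (-(1/2) * x) := by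
        rw [integral_const_mul]
    _ ≤ (2*q)^q := by
        have : ∫ x in Ioi (0:ℝ), Real.exp (-(1/2) * x) = 2 := by
          have := integral_exp_neg_mul_rpow (by norm_num : (0:ℝ) < 1) (by norm_num : (0:ℝ) < 1/2)
          simp only [Real.rpow_one] at this
          rw [this]
          norm_num [Real.Gamma_add_one, Real.Gamma_one]
        rw [this]
        have h2e : Real.exp (-q) * 2 ≤ 1 := by
          rw [Real.exp_neg]
          rw [inv_mul_le_iff₀ (Real.exp_pos q), mul_one]
          calc (2:ℝ) ≤ Real.exp 1 := by
                have := Real.add_one_le_exp 1; linarith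
            _ ≤ Real.exp q := Real.exp_le_exp.mpr hq
        nlinarith [Real.rpow_nonneg h2q.le q]

lemma gamma_le_half {q : ℝ} (hq : 1/2 ≤ q) (hq1 : q ≤ 1) :
    Real.Gamma (q + 1) ≤ (2 * q) ^ q := by
  have hq0 : 0 < q := by linarith
  have h1 : Real.Gamma (q + 1) ≤ 1 := by
    have hconv := Real.convexOn_Gamma
    have key := hconv.2 (by norm_num : (1:ℝ) ∈ Ioi (0:ℝ)) (by norm_num : (2:ℝ) ∈ Ioi (0:ℝ))
      (by linarith : (0:ℝ) ≤ 1 - q) hq0.le (by ring : (1 - q) + q = 1)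
    have heq : (1 - q) • (1:ℝ) + q • (2:ℝ) = q + 1 := by simp [smul_eq_mul]; ring
    rw [heq] at key
    have hg2 : Real.Gamma 2 = 1 := by
      rw [show (2:ℝ) = 1 + 1 by norm_num, Real.Gamma_add_one (one_ne_zero : (1:ℝ) ≠ 0),
        Real.Gamma_one, mul_one]
    rw [Real.Gamma_one, hg2] at key
    simp only [smul_eq_mul, mul_one] at key
    linarith
  calc Real.Gamma (q + 1) ≤ 1 := h1
    _ ≤ (2 * q) ^ q := Real.one_le_rpow (by linarith) hq0.le

lemma moment_from_exp_tail {Ω : Type*} [MeasurableSpace Ω] (μ : Measure Ω)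
    (U : Ω → ℝ) (hU : AEMeasurable U μ) (hU0 : ∀ ω, 0 ≤ U ω) (β : ℝ) (hβ : 0 < β)
    (htail : ∀ u : ℝ, 0 < u → μ {ω | u < U ω} ≤ ENNReal.ofReal (β * Real.exp (-u)))
    (q : ℝ) (hq : 0 < q) :
    ∫⁻ ω, ENNReal.ofReal (U ω ^ q) ∂μ ≤ ENNReal.ofReal (β * Real.Gamma (q + 1)) := by
  rw [lintegral_rpow_eq_lintegral_meas_lt_mul μ (ae_of_all μ hU0) hU hq]
  have hint : IntegrableOn (fun t : ℝ => β * (Real.exp (-t) * t ^ (q - 1))) (Ioi (0:ℝ)) :=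
    (Real.GammaIntegral_convergent hq).const_mul β
  have step : ∫⁻ t in Ioi (0:ℝ), μ {a | t < U a} * ENNReal.ofReal (t ^ (q - 1))
      ≤ ∫⁻ t in Ioi (0:ℝ), ENNReal.ofReal (β * (Real.exp (-t) * t ^ (q - 1))) := by
    apply setLIntegral_mono' measurableSet_Ioi
    intro t ht
    have ht0 : (0:ℝ) < t := ht
    calc μ {a | t < U a} * ENNReal.ofReal (t ^ (q - 1))
        ≤ ENNReal.ofReal (β * Real.exp (-t)) * ENNReal.ofReal (t ^ (q - 1)) :=
          mul_le_mul_left (htail t ht0) _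
      _ = ENNReal.ofReal (β * (Real.exp (-t) * t ^ (q - 1))) := by
          rw [← ENNReal.ofReal_mul (by positivity), mul_assoc]
  have heq : ∫⁻ t in Ioi (0:ℝ), ENNReal.ofReal (β * (Real.exp (-t) * t ^ (q - 1)))
      = ENNReal.ofReal (β * Real.Gamma q) := by
    rw [← ofReal_integral_eq_lintegral_ofReal hint]
    · rw [integral_const_mul, ← Real.Gamma_eq_integral hq]
    · filter_upwards [self_mem_ae_restrict (measurableSet_Ioi : MeasurableSet (Ioi (0:ℝ)))]
      intro t ht
      have ht0 : (0:ℝ) < t := ht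
      positivity
  calc ENNReal.ofReal q * ∫⁻ t in Ioi (0:ℝ), μ {a | t < U a} * ENNReal.ofReal (t ^ (q - 1))
      ≤ ENNReal.ofReal q * ENNReal.ofReal (β * Real.Gamma q) := by
        exact mul_le_mul_right (le_trans step (le_of_eq heq)) _
    _ = ENNReal.ofReal (β * Real.Gamma (q + 1)) := by
        rw [← ENNReal.ofReal_mul hq.le, Real.Gamma_add_one hq.ne']
        ring_nf

lemma g_sum {σ B : ℝ} (hσ : 0 < σ) (hB : 0 < B) {s : ℝ} (hs : 0 ≤ s) :
    σ * Real.sqrt (((Real.sqrt (σ^2 + 4*B*s) - σ)/(2*B))^2)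
      + B * ((Real.sqrt (σ^2 + 4*B*s) - σ)/(2*B))^2 = s := by
  set D := Real.sqrt (σ^2 + 4*B*s) with hD
  have hD2 : D^2 = σ^2 + 4*B*s := Real.sq_sqrt (by positivity)
  have hDσ : σ ≤ D := by
    rw [hD]
    calc σ = Real.sqrt (σ^2) := (Real.sqrt_sq hσ.le).symm
      _ ≤ _ := Real.sqrt_le_sqrt (by nlinarith)
  have hr : 0 ≤ (D - σ)/(2*B) := div_nonneg (by linarith) (by positivity)
  rw [Real.sqrt_sq hr]
  field_simp
  nlinarith [hD2]

lemma g_inv {σ B : ℝ} (hσ : 0 < σ) (hB : 0 < B) {u : ℝ} (hu : 0 ≤ u) :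
    ((Real.sqrt (σ^2 + 4*B*(σ * Real.sqrt u + B * u)) - σ)/(2*B))^2 = u := by
  have ht2 : Real.sqrt u ^ 2 = u := Real.sq_sqrt hu
  have harg : σ^2 + 4*B*(σ * Real.sqrt u + B * u) = (σ + 2*B*Real.sqrt u)^2 := by
    linear_combination (-4*B^2) * ht2
  rw [harg, Real.sqrt_sq (by positivity)]
  field_simp
  linear_combination (4*B^2) * ht2

lemma g_mono {σ B : ℝ} (hσ : 0 < σ) (hB : 0 < B) {s₁ s₂ : ℝ} (hs₁ : 0 ≤ s₁) (h : s₁ ≤ s₂) :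
    ((Real.sqrt (σ^2 + 4*B*s₁) - σ)/(2*B))^2 ≤ ((Real.sqrt (σ^2 + 4*B*s₂) - σ)/(2*B))^2 := by
  have h1 : σ ≤ Real.sqrt (σ^2 + 4*B*s₁) := by
    calc σ = Real.sqrt (σ^2) := (Real.sqrt_sq hσ.le).symm
      _ ≤ _ := Real.sqrt_le_sqrt (by nlinarith)
  have h2 : Real.sqrt (σ^2 + 4*B*s₁) ≤ Real.sqrt (σ^2 + 4*B*s₂) :=
    Real.sqrt_le_sqrt (by nlinarith)
  apply pow_le_pow_left₀ (div_nonneg (by linarith) (by positivity))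
  apply div_le_div_of_nonneg_right _ (by positivity)
  · linarith

lemma gamma_le {q : ℝ} (hq : 1/2 ≤ q) : Real.Gamma (q + 1) ≤ (2 * q) ^ q := by
  rcases le_total q 1 with h | h
  · exact gamma_le_half hq h
  · exact gamma_le_aux h


/-- **Tails to moments** (Corollary 4.3): if a random variable `X` satisfies the tail bound
`ℙ(|X| > s) ≤ β exp(-s²/(σ² + Bs))` for all `s ≥ 0`, then for every `p ≥ 1` its `p`-th
moment satisfies `𝔼(|X|^p)^{1/p} ≤ β^{1/p} √p σ + 2 β^{1/p} p B`. -/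
theorem tails_to_moments {Ω : Type*} [MeasurableSpace Ω] (μ : Measure Ω)
    [IsProbabilityMeasure μ] (X : Ω → ℂ) (hX : AEMeasurable X μ)
    (β σ B : ℝ) (hβ : 0 < β) (hσ : 0 < σ) (hB : 0 < B)
    (htail : ∀ s : ℝ, 0 ≤ s →
      μ {ω | s < ‖X ω‖} ≤ ENNReal.ofReal (β * Real.exp (-(s ^ 2) / (σ ^ 2 + B * s))))
    (p : ℝ) (hp : 1 ≤ p) :
    (∫⁻ ω, (‖X ω‖₊ : ℝ≥0∞) ^ p ∂μ) ^ (1 / p) ≤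
      ENNReal.ofReal (β ^ (1 / p) * Real.sqrt p * σ + 2 * β ^ (1 / p) * p * B) := by
  have hp0 : (0:ℝ) < p := lt_of_lt_of_le one_pos hp
  set U : Ω → ℝ := fun ω => ((Real.sqrt (σ^2 + 4*B*‖X ω‖) - σ)/(2*B))^2 with hUdef
  have hU0 : ∀ ω, 0 ≤ U ω := fun ω => sq_nonneg _
  have hUmeas : AEMeasurable U μ := by
    have hcont : Continuous fun s : ℝ => ((Real.sqrt (σ^2 + 4*B*s) - σ)/(2*B))^2 := by
      fun_prop
    exact hcont.measurable.comp_aemeasurable hX.norm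
  -- tail bound for U
  have htailU : ∀ u : ℝ, 0 < u → μ {ω | u < U ω} ≤ ENNReal.ofReal (β * Real.exp (-u)) := by
    intro u hu
    set s := σ * Real.sqrt u + B * u with hs
    have hs0 : 0 ≤ s := by positivity
    have hsub : {ω | u < U ω} ⊆ {ω | s < ‖X ω‖} := by
      intro ω hω
      simp only [Set.mem_setOf_eq] at hω ⊢
      by_contra hc
      push_neg at hc
      have h1 : U ω ≤ ((Real.sqrt (σ^2 + 4*B*s) - σ)/(2*B))^2 :=
        g_mono hσ hB (norm_nonneg _) hc
      have h2 : ((Real.sqrt (σ^2 + 4*B*s) - σ)/(2*B))^2 = u := g_inv hσ hB hu.le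
      rw [h2] at h1
      exact absurd hω (not_lt.mpr h1)
    have hexp : β * Real.exp (-(s ^ 2) / (σ ^ 2 + B * s)) ≤ β * Real.exp (-u) := by
      apply mul_le_mul_of_nonneg_left _ hβ.le
      apply Real.exp_le_exp.mpr
      have hd : (0:ℝ) < σ ^ 2 + B * s := by positivity
      rw [neg_div, neg_le_neg_iff, le_div_iff₀ hd]
      have ht2 : Real.sqrt u ^ 2 = u := Real.sq_sqrt hu.le
      have ht0 : 0 ≤ Real.sqrt u := Real.sqrt_nonneg u
      rw [hs]
      nlinarith [mul_nonneg (mul_nonneg hσ.le hB.le) (mul_nonneg ht0 hu.le), ht2]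
    calc μ {ω | u < U ω} ≤ μ {ω | s < ‖X ω‖} := measure_mono hsub
      _ ≤ ENNReal.ofReal (β * Real.exp (-(s ^ 2) / (σ ^ 2 + B * s))) := htail s hs0
      _ ≤ ENNReal.ofReal (β * Real.exp (-u)) := ENNReal.ofReal_le_ofReal hexp
  -- decomposition
  set f1 : Ω → ℝ≥0∞ := fun ω => ENNReal.ofReal (σ * Real.sqrt (U ω)) with hf1def
  set f2 : Ω → ℝ≥0∞ := fun ω => ENNReal.ofReal (B * U ω) with hf2def
  have hf1m : AEMeasurable f1 μ := by
    have hc : Continuous fun u : ℝ => ENNReal.ofReal (σ * Real.sqrt u) :=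
      ENNReal.continuous_ofReal.comp (by fun_prop)
    exact hc.measurable.comp_aemeasurable hUmeas
  have hf2m : AEMeasurable f2 μ := by
    have hc : Continuous fun u : ℝ => ENNReal.ofReal (B * u) :=
      ENNReal.continuous_ofReal.comp (by fun_prop)
    exact hc.measurable.comp_aemeasurable hUmeas
  have hXrw : ∀ ω, (‖X ω‖₊ : ℝ≥0∞) = (f1 + f2) ω := by
    intro ω
    simp only [Pi.add_apply, hf1def, hf2def]
    rw [show (‖X ω‖₊ : ℝ≥0∞) = ENNReal.ofReal ‖X ω‖ from (ofReal_norm (X ω)).symm,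
      ← ENNReal.ofReal_add (by positivity) (mul_nonneg hB.le (hU0 ω))]
    congr 1
    exact (g_sum hσ hB (norm_nonneg (X ω))).symm
  -- moment bounds
  have bound1 : (∫⁻ ω, f1 ω ^ p ∂μ) ^ (1/p) ≤ ENNReal.ofReal (β ^ (1/p) * Real.sqrt p * σ) := by
    have hpt : ∀ ω, f1 ω ^ p = ENNReal.ofReal (σ ^ p) * ENNReal.ofReal (U ω ^ (p/2)) := by
      intro ω
      rw [hf1def]
      rw [ENNReal.ofReal_rpow_of_nonneg (by positivity) hp0.le]
      rw [Real.mul_rpow hσ.le (Real.sqrt_nonneg _),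
        Real.sqrt_eq_rpow, ← Real.rpow_mul (hU0 ω),
        show (1/2) * p = p/2 by ring,
        ENNReal.ofReal_mul (by positivity)]
    have hlin : ∫⁻ ω, f1 ω ^ p ∂μ ≤ ENNReal.ofReal (σ ^ p * (β * p ^ (p/2))) := by
      calc ∫⁻ ω, f1 ω ^ p ∂μ
          = ENNReal.ofReal (σ ^ p) * ∫⁻ ω, ENNReal.ofReal (U ω ^ (p/2)) ∂μ := by
            simp_rw [hpt]; exact lintegral_const_mul' _ _ ENNReal.ofReal_ne_top
        _ ≤ ENNReal.ofReal (σ ^ p) * ENNReal.ofReal (β * Real.Gamma (p/2 + 1)) := by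
            exact mul_le_mul_right (moment_from_exp_tail μ U hUmeas hU0 β hβ htailU (p/2)
              (by linarith)) _
        _ ≤ ENNReal.ofReal (σ ^ p) * ENNReal.ofReal (β * p ^ (p/2)) := by
            apply mul_le_mul_right
            apply ENNReal.ofReal_le_ofReal
            apply mul_le_mul_of_nonneg_left _ hβ.le
            have := gamma_le (q := p/2) (by linarith)
            rwa [show 2 * (p/2) = p by ring] at this
        _ = ENNReal.ofReal (σ ^ p * (β * p ^ (p/2))) := by
            rw [← ENNReal.ofReal_mul (by positivity)]
    calc (∫⁻ ω, f1 ω ^ p ∂μ) ^ (1/p)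
        ≤ (ENNReal.ofReal (σ ^ p * (β * p ^ (p/2)))) ^ (1/p) :=
          ENNReal.rpow_le_rpow hlin (by positivity)
      _ = ENNReal.ofReal ((σ ^ p * (β * p ^ (p/2))) ^ (1/p)) :=
          ENNReal.ofReal_rpow_of_nonneg (by positivity) (by positivity)
      _ = ENNReal.ofReal (β ^ (1/p) * Real.sqrt p * σ) := by
          congr 1
          rw [Real.mul_rpow (by positivity) (by positivity),
            Real.mul_rpow hβ.le (by positivity),
            ← Real.rpow_mul hσ.le, mul_one_div_cancel hp0.ne', Real.rpow_one,
            ← Real.rpow_mul hp0.le,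
            show p/2 * (1/p) = 1/2 by field_simp,
            ← Real.sqrt_eq_rpow]
          ring
  have bound2 : (∫⁻ ω, f2 ω ^ p ∂μ) ^ (1/p) ≤ ENNReal.ofReal (2 * β ^ (1/p) * p * B) := by
    have hpt : ∀ ω, f2 ω ^ p = ENNReal.ofReal (B ^ p) * ENNReal.ofReal (U ω ^ p) := by
      intro ω
      rw [hf2def]
      rw [ENNReal.ofReal_rpow_of_nonneg (mul_nonneg hB.le (hU0 ω)) hp0.le]
      rw [Real.mul_rpow hB.le (hU0 ω), ENNReal.ofReal_mul (by positivity)]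
    have hlin : ∫⁻ ω, f2 ω ^ p ∂μ ≤ ENNReal.ofReal (B ^ p * (β * (2*p) ^ p)) := by
      calc ∫⁻ ω, f2 ω ^ p ∂μ
          = ENNReal.ofReal (B ^ p) * ∫⁻ ω, ENNReal.ofReal (U ω ^ p) ∂μ := by
            simp_rw [hpt]; exact lintegral_const_mul' _ _ ENNReal.ofReal_ne_top
        _ ≤ ENNReal.ofReal (B ^ p) * ENNReal.ofReal (β * Real.Gamma (p + 1)) := by
            exact mul_le_mul_right (moment_from_exp_tail μ U hUmeas hU0 β hβ htailU p hp0) _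
        _ ≤ ENNReal.ofReal (B ^ p) * ENNReal.ofReal (β * (2*p) ^ p) := by
            apply mul_le_mul_right
            apply ENNReal.ofReal_le_ofReal
            exact mul_le_mul_of_nonneg_left (gamma_le (q := p) (by linarith)) hβ.le
        _ = ENNReal.ofReal (B ^ p * (β * (2*p) ^ p)) := by
            rw [← ENNReal.ofReal_mul (by positivity)]
    calc (∫⁻ ω, f2 ω ^ p ∂μ) ^ (1/p)
        ≤ (ENNReal.ofReal (B ^ p * (β * (2*p) ^ p))) ^ (1/p) :=
          ENNReal.rpow_le_rpow hlin (by positivity)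
      _ = ENNReal.ofReal ((B ^ p * (β * (2*p) ^ p)) ^ (1/p)) :=
          ENNReal.ofReal_rpow_of_nonneg (by positivity) (by positivity)
      _ = ENNReal.ofReal (2 * β ^ (1/p) * p * B) := by
          congr 1
          rw [Real.mul_rpow (by positivity) (by positivity),
            Real.mul_rpow hβ.le (by positivity),
            ← Real.rpow_mul hB.le, mul_one_div_cancel hp0.ne', Real.rpow_one,
            ← Real.rpow_mul (by positivity : (0:ℝ) ≤ 2*p), mul_one_div_cancel hp0.ne',
            Real.rpow_one]
          ring
  calc (∫⁻ ω, (‖X ω‖₊ : ℝ≥0∞) ^ p ∂μ) ^ (1 / p)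
      = (∫⁻ ω, ((f1 + f2) ω) ^ p ∂μ) ^ (1 / p) := by
        congr 1
        exact lintegral_congr fun ω => by rw [hXrw ω]
    _ ≤ (∫⁻ ω, f1 ω ^ p ∂μ) ^ (1/p) + (∫⁻ ω, f2 ω ^ p ∂μ) ^ (1/p) :=
        ENNReal.lintegral_Lp_add_le hf1m hf2m hp
    _ ≤ ENNReal.ofReal (β ^ (1/p) * Real.sqrt p * σ) + ENNReal.ofReal (2 * β ^ (1/p) * p * B) :=
        add_le_add bound1 bound2
    _ = ENNReal.ofReal (β ^ (1 / p) * Real.sqrt p * σ + 2 * β ^ (1 / p) * p * B) := by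
        rw [← ENNReal.ofReal_add (by positivity) (by positivity)]

end
end

section
/- Let d ∈ ℕ and N = (N₁,…,N_d) ∈ ℕ^d, and let V_N be the modified de la Vallée Poussin operator given by V_N(f)(x) = ∑_{k ∈ ℤ^d} f̂(k) v_k exp(2πi k·x), with product weights v_k = ∏_{j=1}^d v_{k_j}, where v_{k_j} = 1 if |k_j| ≤ N_j, v_{k_j} = ((2d+1)N_j − |k_j|)/(2d N_j) if N_j < |k_j| ≤ (2d+1)N_j, and v_{k_j} = 0 if |k_j| > (2d+1)N_j. Then for every f ∈ L_∞(𝕋^d) it holds ‖V_N(f)‖_{L_∞(𝕋^d)} ≤ e · ‖f‖_{L_∞(𝕋^d)}. -/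
open MeasureTheory Real ENNReal

set_option maxHeartbeats 1000000

noncomputable section

/-- Normalized Lebesgue measure on the unit cube `[0,1]^d`, modelling the torus `𝕋^d`. -/
def unitCube (d : ℕ) : Measure (Fin d → ℝ) :=
  volume.restrict (Set.univ.pi fun _ => Set.Icc (0 : ℝ) 1)

/-- The complex exponential `exp(2πi k·x)`. -/
def trigChar {d : ℕ} (k : Fin d → ℤ) (x : Fin d → ℝ) : ℂ :=
  Complex.exp (2 * (Real.pi : ℂ) * Complex.I * ∑ j, (k j : ℂ) * (x j : ℂ))

/-- The `k`-th Fourier coefficient of `f`. -/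
def fourierCoef {d : ℕ} (f : (Fin d → ℝ) → ℂ) (k : Fin d → ℤ) : ℂ :=
  ∫ x, f x * Complex.exp (-(2 * (Real.pi : ℂ) * Complex.I) * ∑ j, (k j : ℂ) * (x j : ℂ))
    ∂(unitCube d)

/-- The univariate de la Vallée Poussin weight `v_{k}` (depending on the dimension `d`):
`1` for `|k| ≤ N`, linearly decaying for `N < |k| ≤ (2d+1)N`, `0` beyond. -/
def vpWeight (d N : ℕ) (k : ℤ) : ℝ :=
  if |k| ≤ (N : ℤ) then 1
  else if |k| ≤ (2 * (d : ℤ) + 1) * N then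
    (((2 * (d : ℤ) + 1) * N - |k| : ℤ) : ℝ) / (2 * (d : ℝ) * N)
  else 0

/-- The modified de la Vallée Poussin operator
`V_N(f)(x) = ∑_{k ∈ ℤ^d} f̂(k) v_k exp(2πi k·x)` with product weights `v_k = ∏_j v_{k_j}`
(the sum is finite since the weights vanish for `|k_j| > (2d+1)N_j`). -/
def vallee (d : ℕ) (N : Fin d → ℕ) (f : (Fin d → ℝ) → ℂ) : (Fin d → ℝ) → ℂ :=
  fun x => ∑ k ∈ Fintype.piFinset
      (fun j => Finset.Icc (-((2 * (d : ℤ) + 1) * N j)) ((2 * (d : ℤ) + 1) * N j)),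
    fourierCoef f k * ((∏ j, vpWeight d (N j) (k j) : ℝ) : ℂ) * trigChar k x

namespace VPaux

/-- `exp(2πi k t)` for `k : ℤ`, `t : ℝ`. -/
def e1 (k : ℤ) (t : ℝ) : ℂ := Complex.exp (2 * (Real.pi : ℂ) * Complex.I * (k * t))

lemma e1_add (a b : ℤ) (t : ℝ) : e1 (a + b) t = e1 a t * e1 b t := by
  rw [e1, e1, e1, ← Complex.exp_add]
  push_cast
  ring_nf

lemma e1_zero (t : ℝ) : e1 0 t = 1 := by simp [e1]

lemma conj_e1 (k : ℤ) (t : ℝ) : (starRingEnd ℂ) (e1 k t) = e1 (-k) t := by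
  rw [e1, e1, ← Complex.exp_conj]
  congr 1
  rw [map_mul, map_mul, map_mul, map_mul]
  simp only [Complex.conj_I, map_ofNat, Complex.conj_ofReal, map_intCast]
  push_cast
  ring

lemma e1_periodic (k : ℤ) : Function.Periodic (e1 k) 1 := by
  intro t
  rw [e1, e1]
  push_cast
  have : (2 * (Real.pi : ℂ) * Complex.I * (k * ((t:ℂ) + 1)))
      = 2 * (Real.pi : ℂ) * Complex.I * (k * t) + k * (2 * Real.pi * Complex.I) := by ring
  rw [this, Complex.exp_add, Complex.exp_int_mul_two_pi_mul_I, mul_one]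

lemma continuous_e1 (k : ℤ) : Continuous (e1 k) := by
  unfold e1; fun_prop

lemma integral_e1 (k : ℤ) :
    ∫ t in (0:ℝ)..1, e1 k t = if k = 0 then 1 else 0 := by
  rcases eq_or_ne k 0 with hk | hk
  · simp [hk, e1]
  · have hc : (2 * (Real.pi : ℂ) * Complex.I * k) ≠ 0 := by
      simp [Real.pi_ne_zero, Complex.I_ne_zero, hk, Complex.ofReal_ne_zero]
    have : ∀ t : ℝ, e1 k t = Complex.exp ((2 * (Real.pi : ℂ) * Complex.I * k) * t) := by
      intro t; rw [e1]; ring_nf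
    simp only [this]
    rw [integral_exp_mul_complex hc]
    have h1 : (2 * (Real.pi : ℂ) * Complex.I * k) * (1:ℝ) = k * (2 * Real.pi * Complex.I) := by
      push_cast; ring
    have h0 : (2 * (Real.pi : ℂ) * Complex.I * k) * (0:ℝ) = 0 := by push_cast; ring
    rw [h1, h0, Complex.exp_int_mul_two_pi_mul_I, Complex.exp_zero]
    simp [hk]

/-- Partial geometric sum. -/
def Sgeo (m : ℕ) (t : ℝ) : ℂ := ∑ j ∈ Finset.range m, e1 j t

/-- The (unnormalized) Fejér kernel. -/
def fejR (m : ℕ) (t : ℝ) : ℝ := Complex.normSq (Sgeo m t)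

lemma fejR_nonneg (m : ℕ) (t : ℝ) : 0 ≤ fejR m t := Complex.normSq_nonneg _

lemma continuous_fejR (m : ℕ) : Continuous (fejR m) := by
  unfold fejR Sgeo
  exact Complex.continuous_normSq.comp (continuous_finset_sum _ fun j _ => continuous_e1 j)

lemma fej_double (m : ℕ) (t : ℝ) :
    (fejR m t : ℂ) = ∑ j ∈ Finset.range m, ∑ l ∈ Finset.range m, e1 ((j:ℤ) - l) t := by
  rw [fejR, ← Complex.mul_conj, Sgeo, map_sum, Finset.sum_mul_sum]
  refine Finset.sum_congr rfl fun j _ => Finset.sum_congr rfl fun l _ => ?_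
  rw [conj_e1, ← e1_add, sub_eq_add_neg]

lemma integral_fejR (m : ℕ) : ∫ t in (0:ℝ)..1, fejR m t = m := by
  have h : ∫ t in (0:ℝ)..1, (fejR m t : ℂ) = (m : ℂ) := by
    simp_rw [fej_double]
    have inner : ∀ j : ℕ, ∫ t in (0:ℝ)..1, ∑ l ∈ Finset.range m, e1 ((j:ℤ) - l) t
        = ∑ l ∈ Finset.range m, if (j:ℤ) - l = 0 then (1:ℂ) else 0 := by
      intro j
      rw [intervalIntegral.integral_finset_sum
        (fun l _ => (continuous_e1 _).intervalIntegrable _ _)]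
      exact Finset.sum_congr rfl fun l _ => integral_e1 _
    have hint : ∀ j ∈ Finset.range m, IntervalIntegrable
        (fun t => ∑ l ∈ Finset.range m, e1 ((j:ℤ) - l) t) volume 0 1 := fun j _ =>
      (continuous_finset_sum _ fun l _ => continuous_e1 _).intervalIntegrable 0 1
    rw [intervalIntegral.integral_finset_sum
        (f := fun (j : ℕ) t => ∑ l ∈ Finset.range m, e1 ((j:ℤ) - l) t) hint]
    rw [Finset.sum_congr rfl fun j _ => inner j]
    simp only [sub_eq_zero, Int.natCast_inj, Finset.sum_ite_eq, Finset.sum_boole]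
    rw [Finset.filter_true_of_mem fun x hx => hx, Finset.card_range]
  rw [intervalIntegral.integral_ofReal] at h
  exact_mod_cast h

lemma double_sum (m : ℕ) (g : ℤ → ℂ) :
    ∑ j ∈ Finset.range m, ∑ l ∈ Finset.range m, g ((j:ℤ) - l)
      = ∑ a ∈ Finset.range m, ((m:ℂ) - a) * g a
        + ∑ a ∈ Finset.range m, ((m:ℂ) - a - 1) * g (-(a+1)) := by
  induction m with
  | zero => simp
  | succ n ih =>
    have h1 : ∑ l ∈ Finset.range (n+1), g ((n:ℤ) - l) = ∑ a ∈ Finset.range (n+1), g a := by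
      rw [← Finset.sum_range_reflect]
      refine Finset.sum_congr rfl fun l hl => ?_
      congr 1
      have := Finset.mem_range.mp hl
      omega
    have h2 : ∑ j ∈ Finset.range n, g ((j:ℤ) - n) = ∑ a ∈ Finset.range n, g (-(a+1)) := by
      rw [← Finset.sum_range_reflect]
      refine Finset.sum_congr rfl fun j hj => ?_
      congr 1
      have := Finset.mem_range.mp hj
      omega
    rw [Finset.sum_range_succ]
    have hsplit : ∀ j ∈ Finset.range n, ∑ l ∈ Finset.range (n+1), g ((j:ℤ) - l)
        = (∑ l ∈ Finset.range n, g ((j:ℤ) - l)) + g ((j:ℤ) - n) := fun j _ =>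
      Finset.sum_range_succ _ _
    rw [Finset.sum_congr rfl hsplit, Finset.sum_add_distrib, ih, h1, h2]
    -- split RHS sums
    rw [Finset.sum_range_succ (fun a => ((↑(n+1):ℂ) - a) * g a),
        Finset.sum_range_succ (fun a => ((↑(n+1):ℂ) - a - 1) * g (-(a+1))),
        Finset.sum_range_succ (fun a => g (a:ℤ))]
    have c1 : ∀ a ∈ Finset.range n, ((↑(n+1):ℂ) - a) * g a = ((n:ℂ) - a) * g a + g a := by
      intro a _; push_cast; ring
    have c2 : ∀ a ∈ Finset.range n,
        ((↑(n+1):ℂ) - a - 1) * g (-(a+1)) = ((n:ℂ) - a - 1) * g (-(a+1)) + g (-(a+1)) := by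
      intro a _; push_cast; ring
    rw [Finset.sum_congr rfl c1, Finset.sum_congr rfl c2,
        Finset.sum_add_distrib, Finset.sum_add_distrib]
    push_cast
    ring
/-- The univariate de la Vallée Poussin kernel. -/
def ker (d N : ℕ) (t : ℝ) : ℂ :=
  ∑ k ∈ Finset.Icc (-((2 * (d : ℤ) + 1) * N)) ((2 * (d : ℤ) + 1) * N),
    (vpWeight d N k : ℂ) * e1 k t

lemma sum_Icc_split (n : ℕ) (h : ℤ → ℂ) :
    ∑ k ∈ Finset.Icc (-(n:ℤ)) n, h k
      = ∑ j ∈ Finset.range (n+1), h j + ∑ j ∈ Finset.range n, h (-(j+1)) := by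
  induction n with
  | zero => simp
  | succ n ih =>
    have hins : Finset.Icc (-(((n+1:ℕ)):ℤ)) ((n+1:ℕ):ℤ)
        = insert (-(((n+1:ℕ)):ℤ)) (insert (((n+1:ℕ)):ℤ) (Finset.Icc (-(n:ℤ)) n)) := by
      push_cast
      ext k
      simp only [Finset.mem_Icc, Finset.mem_insert]
      omega
    have h1 : (-(((n+1:ℕ)):ℤ)) ∉ insert (((n+1:ℕ)):ℤ) (Finset.Icc (-(n:ℤ)) n) := by
      simp only [Finset.mem_insert, Finset.mem_Icc]; push_cast; omega
    have h2 : (((n+1:ℕ)):ℤ) ∉ Finset.Icc (-(n:ℤ)) n := by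
      simp only [Finset.mem_Icc]; push_cast; omega
    rw [hins, Finset.sum_insert h1, Finset.sum_insert h2]
    conv_rhs => rw [Finset.sum_range_succ (fun j => h (j:ℤ)) (n+1),
      Finset.sum_range_succ (fun j => h (-((j:ℤ)+1))) n]
    rw [ih]
    push_cast
    abel

lemma vp_coef (d N : ℕ) (hd : 1 ≤ d) (hN : 1 ≤ N) (k : ℤ)
    (hk : |k| ≤ (((2*d+1)*N : ℕ) : ℤ)) :
    (2*(d:ℝ)*N) * vpWeight d N k
      = (((((2*d+1)*N : ℕ) : ℤ) - |k| : ℤ) : ℝ) - ((max ((N:ℤ) - |k|) 0 : ℤ) : ℝ) := by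
  have hden : (2*(d:ℝ)*N) ≠ 0 := by
    have : (0:ℝ) < 2*(d:ℝ)*N := by positivity
    exact ne_of_gt this
  have hb : ((2 * (d : ℤ) + 1) * N) = (((2*d+1)*N : ℕ) : ℤ) := by push_cast; ring
  rw [vpWeight]
  split_ifs with h1 h2
  · have hmax : max ((N:ℤ) - |k|) 0 = (N:ℤ) - |k| := max_eq_left (by omega)
    rw [hmax, mul_one]
    push_cast
    ring
  · have hmax : max ((N:ℤ) - |k|) 0 = 0 := max_eq_right (by omega)
    rw [hmax]
    rw [mul_comm, div_mul_cancel₀ _ hden]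
    push_cast
    ring
  · exfalso
    rw [hb] at h2
    omega

lemma ker_mul (d N : ℕ) (hd : 1 ≤ d) (hN : 1 ≤ N) (t : ℝ) :
    ((2*(d:ℝ)*N : ℝ) : ℂ) * ker d N t
      = ((fejR ((2*d+1)*N) t : ℝ) : ℂ) - ((fejR N t : ℝ) : ℂ) := by
  obtain ⟨M, hM⟩ : ∃ M : ℕ, (2*d+1)*N = M := ⟨_, rfl⟩
  have hMZ : ((2 * (d : ℤ) + 1) * (N:ℤ)) = (M : ℤ) := by push_cast [← hM]; ring
  have hNM : N < M := by nlinarith [hM]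
  rw [hM]
  -- expand the Fejer kernels
  have hfM : (fejR M t : ℂ) = ∑ a ∈ Finset.range (M+1), ((M:ℂ) - a) * e1 a t
      + ∑ a ∈ Finset.range M, ((M:ℂ) - a - 1) * e1 (-(a+1)) t := by
    rw [fej_double, double_sum M (fun k => e1 k t)]
    congr 1
    rw [Finset.sum_range_succ]
    simp
  have hfN : (fejR N t : ℂ)
      = ∑ a ∈ Finset.range (M+1), ((max ((N:ℤ) - a) 0 : ℤ) : ℂ) * e1 a t
      + ∑ a ∈ Finset.range M, ((max ((N:ℤ) - (a+1)) 0 : ℤ) : ℂ) * e1 (-(a+1)) t := by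
    rw [fej_double, double_sum N (fun k => e1 k t)]
    congr 1
    · have step1 : ∑ a ∈ Finset.range N, ((N:ℂ) - a) * e1 a t
          = ∑ a ∈ Finset.range N, ((max ((N:ℤ) - a) 0 : ℤ) : ℂ) * e1 a t := by
        refine Finset.sum_congr rfl fun a ha => ?_
        have ha' := Finset.mem_range.mp ha
        have hm : max ((N:ℤ) - a) 0 = (N:ℤ) - a := max_eq_left (by omega)
        rw [hm]; push_cast; ring
      rw [step1]
      refine Finset.sum_subset (Finset.range_subset_range.mpr (by omega : N ≤ M+1)) ?_
      intro a _ ha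
      have ha' : N ≤ a := by
        by_contra hc
        exact ha (Finset.mem_range.mpr (by omega))
      have hm : max ((N:ℤ) - a) 0 = 0 := max_eq_right (by omega)
      rw [hm]; simp
    · have step1 : ∑ a ∈ Finset.range N, ((N:ℂ) - a - 1) * e1 (-(a+1)) t
          = ∑ a ∈ Finset.range N, ((max ((N:ℤ) - (a+1)) 0 : ℤ) : ℂ) * e1 (-(a+1)) t := by
        refine Finset.sum_congr rfl fun a ha => ?_
        have ha' := Finset.mem_range.mp ha
        have hm : max ((N:ℤ) - (a+1)) 0 = (N:ℤ) - (a+1) := max_eq_left (by omega)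
        rw [hm]; push_cast; ring
      rw [step1]
      refine Finset.sum_subset (Finset.range_subset_range.mpr (by omega : N ≤ M)) ?_
      intro a _ ha
      have ha' : N ≤ a := by
        by_contra hc
        exact ha (Finset.mem_range.mpr (by omega))
      have hm : max ((N:ℤ) - (a+1)) 0 = 0 := max_eq_right (by omega)
      rw [hm]; simp
  rw [hfM, hfN, ker,
    show (-((2 * (d:ℤ) + 1) * N)) = (-(M:ℤ)) by rw [hMZ],
    show ((2 * (d:ℤ) + 1) * (N:ℤ)) = ((M:ℤ)) from hMZ,
    sum_Icc_split M (fun k => (vpWeight d N k : ℂ) * e1 k t),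
    mul_add, Finset.mul_sum, Finset.mul_sum, add_sub_add_comm,
    ← Finset.sum_sub_distrib, ← Finset.sum_sub_distrib]
  have key : ∀ k : ℤ, |k| ≤ (M:ℤ) →
      ((2*(d:ℝ)*N : ℝ) : ℂ) * (vpWeight d N k : ℂ)
        = (((M:ℤ) - |k| : ℤ) : ℂ) - ((max ((N:ℤ) - |k|) 0 : ℤ) : ℂ) := by
    intro k hk
    have h := vp_coef d N hd hN k (by rw [hM]; exact hk)
    rw [hM] at h
    calc ((2*(d:ℝ)*N : ℝ) : ℂ) * (vpWeight d N k : ℂ)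
        = (((2*(d:ℝ)*N) * vpWeight d N k : ℝ) : ℂ) := by push_cast; ring
      _ = (((M:ℤ) - |k| : ℤ) : ℂ) - ((max ((N:ℤ) - |k|) 0 : ℤ) : ℂ) := by
          rw [h, Complex.ofReal_sub, Complex.ofReal_intCast, Complex.ofReal_intCast]
  congr 1
  · refine Finset.sum_congr rfl fun j hj => ?_
    have hj' := Finset.mem_range.mp hj
    have habs : |(j:ℤ)| = (j:ℤ) := abs_of_nonneg (by positivity)
    have hk := key (j:ℤ) (by rw [habs]; omega)
    rw [habs] at hk
    rw [← mul_assoc, hk]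
    push_cast
    ring
  · refine Finset.sum_congr rfl fun j hj => ?_
    have hj' := Finset.mem_range.mp hj
    have habs : |(-((j:ℤ)+1))| = (j:ℤ)+1 := by
      rw [abs_neg]; exact abs_of_nonneg (by positivity)
    have hk := key (-((j:ℤ)+1)) (by rw [habs]; omega)
    rw [habs] at hk
    rw [← mul_assoc, hk]
    push_cast
    ring

lemma continuous_ker (d N : ℕ) : Continuous (ker d N) :=
  continuous_finset_sum _ fun k _ => continuous_const.mul (continuous_e1 k)

lemma ker_periodic (d N : ℕ) : Function.Periodic (ker d N) 1 := by
  intro t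
  unfold ker
  exact Finset.sum_congr rfl fun k _ => by rw [e1_periodic k t]

lemma ker_norm_le (d N : ℕ) (hd : 1 ≤ d) (hN : 1 ≤ N) (t : ℝ) :
    ‖ker d N t‖ ≤ (fejR ((2*d+1)*N) t + fejR N t) / (2*(d:ℝ)*N) := by
  have hpos : (0:ℝ) < 2*(d:ℝ)*N := by positivity
  rw [le_div_iff₀ hpos]
  have h := ker_mul d N hd hN t
  have h2 : ‖((2*(d:ℝ)*N : ℝ) : ℂ) * ker d N t‖ = (2*(d:ℝ)*N) * ‖ker d N t‖ := by
    rw [norm_mul, Complex.norm_real, Real.norm_of_nonneg hpos.le]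
  rw [mul_comm (‖ker d N t‖), ← h2, h]
  have h3 : ‖((fejR ((2*d+1)*N) t : ℝ) : ℂ) - ((fejR N t : ℝ) : ℂ)‖
      = |fejR ((2*d+1)*N) t - fejR N t| := by
    rw [← Complex.ofReal_sub, Complex.norm_real, Real.norm_eq_abs]
  rw [h3]
  have hA := fejR_nonneg ((2*d+1)*N) t
  have hB := fejR_nonneg N t
  rw [abs_sub_le_iff]
  constructor <;> linarith

lemma integral_norm_ker (d N : ℕ) (hd : 1 ≤ d) (hN : 1 ≤ N) :
    ∫ t in (0:ℝ)..1, ‖ker d N t‖ ≤ ((d:ℝ)+1)/d := by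
  have hpos : (0:ℝ) < 2*(d:ℝ)*N := by positivity
  have hint1 : IntervalIntegrable (fun t => ‖ker d N t‖) volume 0 1 :=
    ((continuous_ker d N).norm).intervalIntegrable 0 1
  have hint2 : IntervalIntegrable
      (fun t => (fejR ((2*d+1)*N) t + fejR N t) / (2*(d:ℝ)*N)) volume 0 1 :=
    (((continuous_fejR _).add (continuous_fejR _)).div_const _).intervalIntegrable 0 1
  have hmono := intervalIntegral.integral_mono_on (by norm_num : (0:ℝ) ≤ 1) hint1 hint2
    (fun t _ => ker_norm_le d N hd hN t)
  refine hmono.trans ?_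
  rw [intervalIntegral.integral_div, intervalIntegral.integral_add
    ((continuous_fejR _).intervalIntegrable 0 1) ((continuous_fejR _).intervalIntegrable 0 1),
    integral_fejR, integral_fejR]
  rw [div_le_div_iff₀ hpos (by positivity : (0:ℝ) < d)]
  push_cast
  ring_nf
  nlinarith [hN, hd, sq_nonneg ((d:ℝ))]

lemma integral_norm_ker_translate (d N : ℕ) (x : ℝ) :
    ∫ y in Set.Icc (0:ℝ) 1, ‖ker d N (x - y)‖
      = ∫ t in (0:ℝ)..1, ‖ker d N t‖ := by
  rw [MeasureTheory.integral_Icc_eq_integral_Ioc,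
    ← intervalIntegral.integral_of_le (by norm_num : (0:ℝ) ≤ 1)]
  rw [intervalIntegral.integral_comp_sub_left (fun t => ‖ker d N t‖) x]
  have hper : Function.Periodic (fun t => ‖ker d N t‖) 1 :=
    fun t => by simp only [ker_periodic d N t]
  have := hper.intervalIntegral_add_eq (x - 1) 0
  simpa using this

lemma unitCube_univ (d : ℕ) : unitCube d Set.univ = 1 := by
  rw [unitCube, Measure.restrict_apply_univ]
  rw [volume_pi_pi]
  simp [Real.volume_Icc]

instance unitCube_finite (d : ℕ) : IsFiniteMeasure (unitCube d) :=
  ⟨by rw [unitCube_univ]; exact one_lt_top⟩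

lemma cube_integral_prod (d : ℕ) (g : Fin d → ℝ → ℝ) :
    ∫ y, ∏ j, g j (y j) ∂(unitCube d) = ∏ j, ∫ t in Set.Icc (0:ℝ) 1, g j t := by
  rw [unitCube, ← MeasureTheory.integral_indicator
    (MeasurableSet.univ_pi fun _ => measurableSet_Icc)]
  have hind : Set.indicator (Set.univ.pi fun _ => Set.Icc (0:ℝ) 1)
      (fun y => ∏ j, g j (y j))
      = fun y => ∏ j, Set.indicator (Set.Icc (0:ℝ) 1) (g j) (y j) := by
    funext y
    by_cases hy : y ∈ Set.univ.pi fun _ => Set.Icc (0:ℝ) 1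
    · rw [Set.indicator_of_mem hy]
      refine Finset.prod_congr rfl fun j _ => ?_
      rw [Set.indicator_of_mem (hy j (Set.mem_univ j))]
    · rw [Set.indicator_of_notMem hy]
      rw [Set.mem_univ_pi] at hy; push_neg at hy
      obtain ⟨j, hj⟩ := hy
      exact (Finset.prod_eq_zero (Finset.mem_univ j)
        (by rw [Set.indicator_of_notMem hj])).symm
  rw [hind, MeasureTheory.volume_pi, MeasureTheory.integral_fintype_prod_eq_prod
    (fun j => Set.indicator (Set.Icc (0:ℝ) 1) (g j))]
  exact Finset.prod_congr rfl fun j _ => integral_indicator measurableSet_Icc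

lemma vallee_conv (d : ℕ) (N : Fin d → ℕ) (f : (Fin d → ℝ) → ℂ)
    (hfi : Integrable f (unitCube d)) (x : Fin d → ℝ) :
    vallee d N f x = ∫ y, f y * ∏ j, ker d (N j) (x j - y j) ∂(unitCube d) := by
  classical
  have hker : ∀ y : Fin d → ℝ, ∏ j, ker d (N j) (x j - y j)
      = ∑ k ∈ Fintype.piFinset
          (fun j => Finset.Icc (-((2 * (d : ℤ) + 1) * N j)) ((2 * (d : ℤ) + 1) * N j)),
        ∏ j, ((vpWeight d (N j) (k j) : ℂ) * e1 (k j) (x j - y j)) := by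
    intro y
    simp only [ker]
    rw [Finset.prod_univ_sum]
  have hbdd : ∀ k : Fin d → ℤ, ∃ C, ∀ y : Fin d → ℝ,
      ‖∏ j, ((vpWeight d (N j) (k j) : ℂ) * e1 (k j) (x j - y j))‖ ≤ C := by
    intro k
    refine ⟨∏ j, |vpWeight d (N j) (k j)|, fun y => ?_⟩
    rw [norm_prod]
    refine Finset.prod_le_prod (fun j _ => norm_nonneg _) fun j _ => ?_
    rw [norm_mul, Complex.norm_real, Real.norm_eq_abs]
    have : ‖e1 (k j) (x j - y j)‖ = 1 := by
      rw [e1]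
      rw [show (2 * (Real.pi : ℂ) * Complex.I * ((k j : ℂ) * ((x j - y j : ℝ) : ℂ)))
        = (((2 * Real.pi * (k j) * (x j - y j) : ℝ)) : ℂ) * Complex.I by push_cast; ring]
      exact Complex.norm_exp_ofReal_mul_I _
    rw [this, mul_one]
  have hcont : ∀ k : Fin d → ℤ, Continuous
      (fun y : Fin d → ℝ => ∏ j, ((vpWeight d (N j) (k j) : ℂ) * e1 (k j) (x j - y j))) := by
    intro k
    refine continuous_finset_prod _ fun j _ => continuous_const.mul ?_
    have : Continuous (fun y : Fin d → ℝ => x j - y j) :=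
      continuous_const.sub (continuous_apply j)
    exact (Complex.continuous_exp.comp (by fun_prop)).congr fun y => rfl
  have hint : ∀ k ∈ Fintype.piFinset
      (fun j => Finset.Icc (-((2 * (d : ℤ) + 1) * N j)) ((2 * (d : ℤ) + 1) * N j)),
      Integrable (fun y => (∏ j, ((vpWeight d (N j) (k j) : ℂ) * e1 (k j) (x j - y j))) * f y)
        (unitCube d) := by
    intro k _
    exact hfi.bdd_mul ((hcont k).aestronglyMeasurable)
      (Filter.Eventually.of_forall (hbdd k).choose_spec)
  have hterm : ∀ k ∈ Fintype.piFinset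
      (fun j => Finset.Icc (-((2 * (d : ℤ) + 1) * N j)) ((2 * (d : ℤ) + 1) * N j)),
      fourierCoef f k * ((∏ j, vpWeight d (N j) (k j) : ℝ) : ℂ) * trigChar k x
        = ∫ y, (∏ j, ((vpWeight d (N j) (k j) : ℂ) * e1 (k j) (x j - y j))) * f y
            ∂(unitCube d) := by
    intro k _
    rw [fourierCoef, mul_assoc, ← integral_mul_const]
    congr 1
    funext y
    have hprod : ∏ j, ((vpWeight d (N j) (k j) : ℂ) * e1 (k j) (x j - y j))
        = ((∏ j, vpWeight d (N j) (k j) : ℝ) : ℂ)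
          * Complex.exp (∑ j, 2 * (Real.pi : ℂ) * Complex.I * ((k j : ℂ) * ((x j - y j : ℝ) : ℂ))) := by
      rw [Finset.prod_mul_distrib, Complex.exp_sum, Complex.ofReal_prod]
      rfl
    have hexp : -(2 * (Real.pi : ℂ) * Complex.I) * ∑ j, (k j : ℂ) * (y j : ℂ)
        + 2 * (Real.pi : ℂ) * Complex.I * ∑ j, (k j : ℂ) * (x j : ℂ)
        = ∑ j, 2 * (Real.pi : ℂ) * Complex.I * ((k j : ℂ) * ((x j - y j : ℝ) : ℂ)) := by
      have hc : ∀ j ∈ (Finset.univ : Finset (Fin d)),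
          2 * (Real.pi : ℂ) * Complex.I * ((k j : ℂ) * ((x j - y j : ℝ) : ℂ))
          = 2 * (Real.pi : ℂ) * Complex.I * ((k j : ℂ) * (x j : ℂ))
            - 2 * (Real.pi : ℂ) * Complex.I * ((k j : ℂ) * (y j : ℂ)) := by
        intro j _; push_cast; ring
      rw [Finset.sum_congr rfl hc, Finset.sum_sub_distrib, neg_mul, Finset.mul_sum,
        Finset.mul_sum]
      abel
    rw [hprod, trigChar, ← hexp, Complex.exp_add]
    ring
  rw [vallee, Finset.sum_congr rfl hterm, ← integral_finset_sum _ hint]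
  refine integral_congr_ae (Filter.Eventually.of_forall fun y => ?_)
  beta_reduce
  rw [hker y, Finset.mul_sum]
  exact Finset.sum_congr rfl fun k _ => mul_comm _ _


lemma norm_e1 (k : ℤ) (t : ℝ) : ‖e1 k t‖ = 1 := by
  rw [e1, show (2 * (Real.pi : ℂ) * Complex.I * ((k:ℂ) * (t:ℂ)))
    = (((2 * Real.pi * (k:ℝ) * t : ℝ)) : ℂ) * Complex.I by push_cast; ring]
  exact Complex.norm_exp_ofReal_mul_I _

lemma ker_bdd (d N : ℕ) : ∃ C : ℝ, ∀ t : ℝ, ‖ker d N t‖ ≤ C := by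
  refine ⟨∑ k ∈ Finset.Icc (-((2 * (d : ℤ) + 1) * N)) ((2 * (d : ℤ) + 1) * N),
    |vpWeight d N k|, fun t => ?_⟩
  refine (norm_sum_le _ _).trans (le_of_eq ?_)
  refine Finset.sum_congr rfl fun k _ => ?_
  rw [norm_mul, Complex.norm_real, norm_e1, mul_one, Real.norm_eq_abs]

lemma prodker_bdd (d : ℕ) (N : Fin d → ℕ) (x : Fin d → ℝ) :
    ∃ C : ℝ, ∀ y : Fin d → ℝ, ‖∏ j, ker d (N j) (x j - y j)‖ ≤ C := by
  choose C hC using fun j => ker_bdd d (N j)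
  refine ⟨∏ j, max (C j) 0, fun y => ?_⟩
  rw [norm_prod]
  exact Finset.prod_le_prod (fun j _ => norm_nonneg _)
    (fun j _ => (hC j _).trans (le_max_left _ _))

theorem main (d : ℕ) (hd : 0 < d) (N : Fin d → ℕ) (hN : ∀ j, 1 ≤ N j)
    (f : (Fin d → ℝ) → ℂ) (hf : MemLp f ⊤ (unitCube d)) :
    eLpNorm (vallee d N f) ⊤ (unitCube d) ≤
      ENNReal.ofReal (Real.exp 1) * eLpNorm f ⊤ (unitCube d) := by
  set μ := unitCube d with hμ
  rcases eq_or_ne (eLpNorm f ⊤ μ) ⊤ with htop | hfin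
  · rw [htop, ENNReal.mul_top (by simp [Real.exp_pos])]
    exact le_top
  have hfi : Integrable f μ := hf.integrable le_top
  set C := (eLpNorm f ⊤ μ).toReal with hC
  have hC0 : 0 ≤ C := ENNReal.toReal_nonneg
  have hbound : ∀ᵐ y ∂μ, ‖f y‖ ≤ C := by
    have h1 : ∀ᵐ y ∂μ, (‖f y‖₊ : ℝ≥0∞) ≤ eLpNormEssSup f μ := ae_le_eLpNormEssSup
    refine h1.mono fun y hy => ?_
    have h2 : eLpNormEssSup f μ = eLpNorm f ⊤ μ := (eLpNorm_exponent_top (f := f)).symm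
    rw [h2] at hy
    have := ENNReal.toReal_mono hfin hy
    simpa [hC] using this
  -- pointwise bound on vallee
  have hpoint : ∀ x, ‖vallee d N f x‖ ≤ C * Real.exp 1 := by
    intro x
    rw [vallee_conv d N f hfi x]
    set P : (Fin d → ℝ) → ℂ := fun y => ∏ j, ker d (N j) (x j - y j) with hP
    have hPcont : Continuous P := by
      refine continuous_finset_prod _ fun j _ => ?_
      exact (continuous_ker d (N j)).comp (continuous_const.sub (continuous_apply j))
    have hPbdd := prodker_bdd d N x
    have hPint : Integrable (fun y => ‖P y‖) μ := by
      rw [hμ, unitCube]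
      refine ContinuousOn.integrableOn_compact
        (isCompact_univ_pi fun _ => isCompact_Icc) ?_
      exact hPcont.norm.continuousOn
    have hfP : Integrable (fun y => f y * P y) μ := by
      have := hfi.bdd_mul hPcont.aestronglyMeasurable
        (Filter.Eventually.of_forall hPbdd.choose_spec)
      exact this.congr (Filter.Eventually.of_forall fun y => mul_comm _ _)
    have step1 : ‖∫ y, f y * P y ∂μ‖ ≤ ∫ y, ‖f y * P y‖ ∂μ :=
      norm_integral_le_integral_norm _
    have step2 : ∫ y, ‖f y * P y‖ ∂μ ≤ ∫ y, C * ‖P y‖ ∂μ := by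
      refine integral_mono_ae hfP.norm (hPint.const_mul C) ?_
      refine hbound.mono fun y hy => ?_
      show ‖f y * P y‖ ≤ C * ‖P y‖
      rw [norm_mul]
      exact mul_le_mul_of_nonneg_right hy (norm_nonneg _)
    have step3 : ∫ y, C * ‖P y‖ ∂μ = C * ∫ y, ‖P y‖ ∂μ := integral_const_mul C _
    have step4 : ∫ y, ‖P y‖ ∂μ ≤ Real.exp 1 := by
      have hnorm : ∀ y : Fin d → ℝ, ‖P y‖ = ∏ j, ‖ker d (N j) (x j - y j)‖ := by
        intro y; rw [hP, norm_prod]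
      rw [show (fun y => ‖P y‖) = fun y => ∏ j, ‖ker d (N j) (x j - y j)‖ from funext hnorm]
      rw [hμ, cube_integral_prod d (fun j t => ‖ker d (N j) (x j - t)‖)]
      have hfac : ∀ j : Fin d, ∫ t in Set.Icc (0:ℝ) 1, ‖ker d (N j) (x j - t)‖
          ≤ ((d:ℝ)+1)/d := by
        intro j
        rw [integral_norm_ker_translate]
        exact integral_norm_ker d (N j) hd (hN j)
      have hfac0 : ∀ j : Fin d, 0 ≤ ∫ t in Set.Icc (0:ℝ) 1, ‖ker d (N j) (x j - t)‖ :=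
        fun j => integral_nonneg fun t => norm_nonneg _
      calc ∏ j, ∫ t in Set.Icc (0:ℝ) 1, ‖ker d (N j) (x j - t)‖
          ≤ ∏ _j : Fin d, ((d:ℝ)+1)/d :=
            Finset.prod_le_prod (fun j _ => hfac0 j) (fun j _ => hfac j)
        _ = (((d:ℝ)+1)/d) ^ d := by rw [Finset.prod_const, Finset.card_univ, Fintype.card_fin]
        _ ≤ (Real.exp (1/(d:ℝ))) ^ d := by
            refine pow_le_pow_left₀ (by positivity) ?_ d
            have h := Real.add_one_le_exp (1/(d:ℝ))
            have hd0 : (0:ℝ) < d := by exact_mod_cast hd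
            rw [show ((d:ℝ)+1)/d = 1/(d:ℝ)+1 by field_simp; ring]
            exact h
        _ = Real.exp 1 := by
            rw [← Real.exp_nat_mul]
            congr 1
            have hd0 : (d:ℝ) ≠ 0 := by positivity
            field_simp
    calc ‖∫ y, f y * P y ∂μ‖ ≤ C * ∫ y, ‖P y‖ ∂μ :=
          step1.trans (step2.trans (le_of_eq step3))
      _ ≤ C * Real.exp 1 := mul_le_mul_of_nonneg_left step4 hC0
  rw [eLpNorm_exponent_top]
  refine (eLpNormEssSup_le_of_ae_bound (C := C * Real.exp 1)
    (Filter.Eventually.of_forall hpoint)).trans ?_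
  rw [ENNReal.ofReal_mul hC0, hC, ENNReal.ofReal_toReal hfin, mul_comm]


end VPaux

/-- `L_∞ → L_∞` bound for the modified de la Vallée Poussin operator:
`‖V_N(f)‖_∞ ≤ e ‖f‖_∞`. -/
theorem vallee_Linfty_Linfty (d : ℕ) (hd : 0 < d) (N : Fin d → ℕ) (hN : ∀ j, 1 ≤ N j)
    (f : (Fin d → ℝ) → ℂ) (hf : MemLp f ⊤ (unitCube d)) :
    eLpNorm (vallee d N f) ⊤ (unitCube d) ≤
      ENNReal.ofReal (Real.exp 1) * eLpNorm f ⊤ (unitCube d) :=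
  VPaux.main d hd N hN f hf

end
end

section
/- Let d ∈ ℕ, 2 ≤ q < ∞, and let m ∈ ℕ with m ≥ q. Let t(x) = ∑_{j=1}^J t̂(k_j) exp(2πi k_j·x) be a trigonometric polynomial on 𝕋^d whose Fourier coefficients are arranged so that |t̂(k_1)| ≥ |t̂(k_2)| ≥ … ≥ |t̂(k_J)|, and for n ∈ ℕ let t_n(x) = ∑_{j=1}^{min(n,J)} t̂(k_j) exp(2πi k_j·x). Then there exists a trigonometric polynomial s ∈ Σ_{2m} with frequencies contained in {k_{2m+1},…,k_J} such that ‖t − t_{2m} − s‖_{L_q(𝕋^d)} ≤ (80/3) √(q/m) · ‖t − t_m‖_{𝒜_1}. -/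
open MeasureTheory Real ENNReal

noncomputable section

/-! ### Elementary analytic lemmas -/

lemma exp_le_quad {x : ℝ} (hx : |x| ≤ 1) : Real.exp x ≤ 1 + x + x ^ 2 := by
  have h := Real.exp_bound hx (n := 2) (by norm_num)
  have h2 : ∑ m ∈ Finset.range 2, x ^ m / (m.factorial : ℝ) = 1 + x := by
    simp [Finset.sum_range_succ]
  rw [h2] at h
  have h3 : Real.exp x - (1 + x) ≤ |x| ^ 2 * ((3:ℝ) / (2 * 2)) := by
    have := abs_le.mp h; norm_num at this ⊢; linarith [this.2]
  have h4 : |x| ^ 2 = x ^ 2 := sq_abs x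
  nlinarith [sq_nonneg x]

lemma rpow_le_exp_aux {u q : ℝ} (hu : 0 ≤ u) (hq : 0 < q) :
    u ^ q ≤ Real.exp (q * Real.log q - q + u) := by
  rcases eq_or_lt_of_le hu with h | h
  · rw [← h, Real.zero_rpow (ne_of_gt hq)]
    positivity
  · rw [Real.rpow_def_of_pos h]
    apply Real.exp_le_exp.mpr
    have hlog : Real.log (u / q) ≤ u / q - 1 := Real.log_le_sub_one_of_pos (by positivity)
    rw [Real.log_div (ne_of_gt h) (ne_of_gt hq)] at hlog
    have := mul_le_mul_of_nonneg_left hlog (le_of_lt hq)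
    have hq' : q * (u / q - 1) = u - q := by field_simp
    rw [hq'] at this
    nlinarith

lemma mgf_le {ι : Type*} [Fintype ι] (p Y : ι → ℝ) (B l : ℝ) (hp : ∀ j, 0 ≤ p j)
    (h1 : ∑ j, p j = 1) (hB : ∀ j, |Y j| ≤ B)
    (hmean : ∑ j, p j * Y j = 0) (hlB : |l| * B ≤ 1) :
    ∑ j, p j * Real.exp (l * Y j) ≤ Real.exp (l ^ 2 * B ^ 2) := by
  have hj : ∀ j, Real.exp (l * Y j) ≤ 1 + l * Y j + l ^ 2 * B ^ 2 := by
    intro j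
    have habs : |l * Y j| ≤ 1 := by
      rw [abs_mul]
      calc |l| * |Y j| ≤ |l| * B := by
            exact mul_le_mul_of_nonneg_left (hB j) (abs_nonneg l)
        _ ≤ 1 := hlB
    have h1' := exp_le_quad habs
    have h2 : (l * Y j) ^ 2 ≤ l ^ 2 * B ^ 2 := by
      rw [mul_pow]
      have : Y j ^ 2 ≤ B ^ 2 := by
        rw [← sq_abs]
        exact pow_le_pow_left₀ (abs_nonneg _) (hB j) 2
      nlinarith [sq_nonneg l]
    linarith
  calc ∑ j, p j * Real.exp (l * Y j)
      ≤ ∑ j, p j * (1 + l * Y j + l ^ 2 * B ^ 2) := by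
        exact Finset.sum_le_sum fun j _ => mul_le_mul_of_nonneg_left (hj j) (hp j)
    _ = (∑ j, p j) + l * (∑ j, p j * Y j) + l ^ 2 * B ^ 2 * (∑ j, p j) := by
        rw [Finset.mul_sum, Finset.mul_sum, ← Finset.sum_add_distrib, ← Finset.sum_add_distrib]
        congr 1; funext j; ring
    _ = 1 + l ^ 2 * B ^ 2 := by rw [h1, hmean]; ring
    _ ≤ Real.exp (l ^ 2 * B ^ 2) := by linarith [Real.add_one_le_exp (l ^ 2 * B ^ 2)]

/-! ### Khintchine-type moment bound on a finite product space -/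

lemma moment_bound {ι : Type*} [Fintype ι] (M : ℕ) (p Y : ι → ℝ) (B q : ℝ)
    (hp : ∀ j, 0 ≤ p j) (h1 : ∑ j, p j = 1) (hB : ∀ j, |Y j| ≤ B) (hB0 : 0 < B)
    (hmean : ∑ j, p j * Y j = 0) (hq : 0 < q) (hqM : q ≤ M) :
    ∑ ω : Fin M → ι, (∏ i, p (ω i)) * |∑ i, Y (ω i)| ^ q
      ≤ 2 * (Real.sqrt (q * M) * B) ^ q := by
  have hM : (0:ℝ) < M := lt_of_lt_of_le hq hqM
  set l : ℝ := Real.sqrt q / (Real.sqrt M * B) with hl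
  have hl0 : 0 < l := by positivity
  have hlB : l * B ≤ 1 := by
    have hlb : l * B = Real.sqrt q / Real.sqrt M := by rw [hl]; field_simp
    rw [hlb, div_le_one (Real.sqrt_pos.mpr hM)]
    exact Real.sqrt_le_sqrt hqM
  have hl2 : l ^ 2 * B ^ 2 * M = q := by
    rw [hl, div_pow, mul_pow, Real.sq_sqrt hq.le, Real.sq_sqrt hM.le]
    field_simp
  have key : ∀ s : ℝ, |s| = l →
      ∑ ω : Fin M → ι, (∏ i, p (ω i)) * Real.exp (s * ∑ i, Y (ω i)) ≤ Real.exp q := by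
    intro s hs
    calc ∑ ω : Fin M → ι, (∏ i, p (ω i)) * Real.exp (s * ∑ i, Y (ω i))
        = ∑ ω : Fin M → ι, ∏ i, (p (ω i) * Real.exp (s * Y (ω i))) := by
          refine Finset.sum_congr rfl fun ω _ => ?_
          rw [Finset.mul_sum, Real.exp_sum, ← Finset.prod_mul_distrib]
      _ = ∏ _i : Fin M, ∑ j, p j * Real.exp (s * Y j) := by
          rw [Finset.prod_univ_sum (fun _ => Finset.univ)
            (fun (_ : Fin M) j => p j * Real.exp (s * Y j)), Fintype.piFinset_univ]
      _ ≤ ∏ _i : Fin M, Real.exp (s ^ 2 * B ^ 2) := by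
          apply Finset.prod_le_prod
          · intro i _
            exact Finset.sum_nonneg fun j _ =>
              mul_nonneg (hp j) (Real.exp_nonneg _)
          · intro i _
            exact mgf_le p Y B s hp h1 hB hmean (by rw [hs]; exact hlB)
      _ = Real.exp (s ^ 2 * B ^ 2 * M) := by
          rw [Finset.prod_const, ← Real.exp_nat_mul, Finset.card_univ, Fintype.card_fin]
          ring_nf
      _ = Real.exp q := by rw [← sq_abs s, hs, hl2]
  set C : ℝ := Real.exp (q * Real.log q - q) * (1 / l) ^ q with hC
  have hC0 : 0 ≤ C := by positivity
  have hpt : ∀ t : ℝ, |t| ^ q ≤ C * (Real.exp (l * t) + Real.exp (-(l * t))) := by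
    intro t
    have h0 : |t| ^ q = (1 / l) ^ q * (l * |t|) ^ q := by
      rw [← Real.mul_rpow (by positivity) (by positivity)]
      congr 1
      field_simp
    have h1' : (l * |t|) ^ q ≤ Real.exp (q * Real.log q - q) * Real.exp (l * |t|) := by
      rw [← Real.exp_add]
      exact rpow_le_exp_aux (by positivity) hq
    have h2 : Real.exp (l * |t|) ≤ Real.exp (l * t) + Real.exp (-(l * t)) := by
      rcases abs_cases t with ⟨h, _⟩ | ⟨h, _⟩
      · rw [h]; linarith [Real.exp_nonneg (-(l * t))]
      · rw [h, mul_neg]; linarith [Real.exp_nonneg (l * t)]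
    calc |t| ^ q = (1 / l) ^ q * (l * |t|) ^ q := h0
      _ ≤ (1 / l) ^ q * (Real.exp (q * Real.log q - q) * Real.exp (l * |t|)) :=
          mul_le_mul_of_nonneg_left h1' (by positivity)
      _ ≤ (1 / l) ^ q * (Real.exp (q * Real.log q - q) *
            (Real.exp (l * t) + Real.exp (-(l * t)))) :=
          mul_le_mul_of_nonneg_left
            (mul_le_mul_of_nonneg_left h2 (Real.exp_nonneg _)) (by positivity)
      _ = C * (Real.exp (l * t) + Real.exp (-(l * t))) := by rw [hC]; ring
  have hw0 : ∀ ω : Fin M → ι, 0 ≤ ∏ i, p (ω i) :=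
    fun ω => Finset.prod_nonneg fun i _ => hp (ω i)
  have main : ∑ ω : Fin M → ι, (∏ i, p (ω i)) * |∑ i, Y (ω i)| ^ q
      ≤ C * (2 * Real.exp q) := by
    have k1 := key l (abs_of_pos hl0)
    have k2 := key (-l) (by rw [abs_neg]; exact abs_of_pos hl0)
    have k2' : ∑ ω : Fin M → ι, (∏ i, p (ω i)) * Real.exp (-(l * ∑ i, Y (ω i)))
        ≤ Real.exp q := by
      refine le_trans (le_of_eq ?_) k2
      exact Finset.sum_congr rfl fun ω _ => by rw [neg_mul]
    calc ∑ ω : Fin M → ι, (∏ i, p (ω i)) * |∑ i, Y (ω i)| ^ q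
        ≤ ∑ ω : Fin M → ι, (∏ i, p (ω i)) *
            (C * (Real.exp (l * ∑ i, Y (ω i)) + Real.exp (-(l * ∑ i, Y (ω i))))) :=
          Finset.sum_le_sum fun ω _ => mul_le_mul_of_nonneg_left (hpt _) (hw0 ω)
      _ = C * ((∑ ω : Fin M → ι, (∏ i, p (ω i)) * Real.exp (l * ∑ i, Y (ω i)))
            + ∑ ω : Fin M → ι, (∏ i, p (ω i)) * Real.exp (-(l * ∑ i, Y (ω i)))) := by
          rw [← Finset.sum_add_distrib, Finset.mul_sum]
          exact Finset.sum_congr rfl fun ω _ => by ring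
      _ ≤ C * (Real.exp q + Real.exp q) :=
          mul_le_mul_of_nonneg_left (add_le_add k1 k2') hC0
      _ = C * (2 * Real.exp q) := by ring
  refine le_trans main (le_of_eq ?_)
  have hql : q / l = Real.sqrt (q * M) * B := by
    rw [Real.sqrt_mul hq.le, hl, div_div_eq_mul_div,
      div_eq_iff (ne_of_gt (Real.sqrt_pos.mpr hq))]
    linear_combination (Real.sqrt (M:ℝ) * B) * (Real.sq_sqrt hq.le).symm
  have hCe : C * Real.exp q = (q / l) ^ q := by
    have e1 : Real.exp (q * Real.log q - q) * Real.exp q = q ^ q := by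
      rw [← Real.exp_add, Real.rpow_def_of_pos hq]
      congr 1
      ring
    have e2 : (q / l) ^ q = q ^ q * (1 / l) ^ q := by
      rw [div_eq_mul_one_div, Real.mul_rpow hq.le (by positivity)]
    rw [e2, ← e1, hC]
    ring
  rw [← hql, ← hCe]
  ring

lemma norm_rpow_le_re_im {z : ℂ} {q : ℝ} (hq : 0 < q) :
    ‖z‖ ^ q ≤ (2:ℝ) ^ q * (|z.re| ^ q + |z.im| ^ q) := by
  have h1 : ‖z‖ ≤ 2 * max |z.re| |z.im| := by
    refine le_trans (Complex.norm_le_abs_re_add_abs_im z) ?_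
    have := le_max_left |z.re| |z.im|
    have := le_max_right |z.re| |z.im|
    linarith
  have h2 : ‖z‖ ^ q ≤ (2 * max |z.re| |z.im|) ^ q :=
    Real.rpow_le_rpow (norm_nonneg z) h1 hq.le
  have h3 : (2 * max |z.re| |z.im|) ^ q
      = (2:ℝ) ^ q * (max |z.re| |z.im|) ^ q :=
    Real.mul_rpow (by norm_num) (le_max_of_le_left (abs_nonneg _))
  have h4 : (max |z.re| |z.im|) ^ q ≤ |z.re| ^ q + |z.im| ^ q := by
    rcases le_total |z.re| |z.im| with h | h
    · rw [max_eq_right h]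
      have : (0:ℝ) ≤ |z.re| ^ q := Real.rpow_nonneg (abs_nonneg _) q
      linarith
    · rw [max_eq_left h]
      have : (0:ℝ) ≤ |z.im| ^ q := Real.rpow_nonneg (abs_nonneg _) q
      linarith
  calc ‖z‖ ^ q ≤ (2:ℝ) ^ q * (max |z.re| |z.im|) ^ q := by rw [← h3]; exact h2
    _ ≤ (2:ℝ) ^ q * (|z.re| ^ q + |z.im| ^ q) :=
        mul_le_mul_of_nonneg_left h4 (Real.rpow_nonneg (by norm_num) q)

lemma moment_bound_complex {ι : Type*} [Fintype ι] (M : ℕ) (p : ι → ℝ) (Z : ι → ℂ)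
    (B q : ℝ)
    (hp : ∀ j, 0 ≤ p j) (h1 : ∑ j, p j = 1) (hB : ∀ j, ‖Z j‖ ≤ B) (hB0 : 0 < B)
    (hmean : ∑ j, (p j : ℂ) * Z j = 0) (hq : 0 < q) (hqM : q ≤ M) :
    ∑ ω : Fin M → ι, (∏ i, p (ω i)) * ‖∑ i, Z (ω i)‖ ^ q
      ≤ 4 * (2 * Real.sqrt (q * M) * B) ^ q := by
  have hw0 : ∀ ω : Fin M → ι, 0 ≤ ∏ i, p (ω i) :=
    fun ω => Finset.prod_nonneg fun i _ => hp (ω i)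
  have hre := moment_bound M p (fun j => (Z j).re) B q hp h1
    (fun j => le_trans (Complex.abs_re_le_norm (Z j)) (by exact hB j))
    hB0
    (by
      have := congrArg Complex.re hmean
      simpa [Complex.re_sum] using this)
    hq hqM
  have him := moment_bound M p (fun j => (Z j).im) B q hp h1
    (fun j => le_trans (Complex.abs_im_le_norm (Z j)) (by exact hB j))
    hB0
    (by
      have := congrArg Complex.im hmean
      simpa [Complex.im_sum] using this)
    hq hqM
  calc ∑ ω : Fin M → ι, (∏ i, p (ω i)) * ‖∑ i, Z (ω i)‖ ^ q
      ≤ ∑ ω : Fin M → ι, (∏ i, p (ω i)) *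
          ((2:ℝ) ^ q * (|(∑ i, Z (ω i)).re| ^ q + |(∑ i, Z (ω i)).im| ^ q)) :=
        Finset.sum_le_sum fun ω _ =>
          mul_le_mul_of_nonneg_left (norm_rpow_le_re_im hq) (hw0 ω)
    _ = (2:ℝ) ^ q * ((∑ ω : Fin M → ι, (∏ i, p (ω i)) * |∑ i, (Z (ω i)).re| ^ q)
          + ∑ ω : Fin M → ι, (∏ i, p (ω i)) * |∑ i, (Z (ω i)).im| ^ q) := by
        rw [← Finset.sum_add_distrib, Finset.mul_sum]
        refine Finset.sum_congr rfl fun ω _ => ?_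
        rw [Complex.re_sum, Complex.im_sum]
        ring
    _ ≤ (2:ℝ) ^ q * (2 * (Real.sqrt (q * M) * B) ^ q + 2 * (Real.sqrt (q * M) * B) ^ q) :=
        mul_le_mul_of_nonneg_left (add_le_add hre him) (Real.rpow_nonneg (by norm_num) q)
    _ = 4 * (2 * Real.sqrt (q * M) * B) ^ q := by
        have e : ((2:ℝ) * (Real.sqrt (q * M) * B)) ^ q
            = (2:ℝ) ^ q * (Real.sqrt (q * M) * B) ^ q :=
          Real.mul_rpow (by norm_num)
            (mul_nonneg (Real.sqrt_nonneg _) (le_of_lt hB0))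
        rw [show (2:ℝ) * Real.sqrt (q * M) * B = 2 * (Real.sqrt (q * M) * B) from
          mul_assoc 2 _ B, e]
        ring

/-! ### Measure-theoretic infrastructure -/

lemma norm_trigChar {d : ℕ} (k : Fin d → ℤ) (x : Fin d → ℝ) : ‖trigChar k x‖ = 1 := by
  unfold trigChar
  rw [Complex.norm_exp]
  have h : (∑ j, (k j : ℂ) * (x j : ℂ)) = ((∑ j, (k j : ℝ) * x j : ℝ) : ℂ) := by
    push_cast; ring
  rw [h]
  have : (2 * (Real.pi : ℂ) * Complex.I * ((∑ j, (k j : ℝ) * x j : ℝ) : ℂ)).re = 0 := by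
    simp [Complex.mul_re, Complex.mul_im]
  rw [this, Real.exp_zero]

lemma continuous_trigChar {d : ℕ} (k : Fin d → ℤ) : Continuous (trigChar k) := by
  unfold trigChar
  fun_prop

lemma unitCube_univ (d : ℕ) : unitCube d Set.univ = 1 := by
  rw [unitCube, Measure.restrict_apply_univ, volume_pi_pi]
  simp [Real.volume_Icc]

instance unitCube_prob (d : ℕ) : IsProbabilityMeasure (unitCube d) :=
  ⟨unitCube_univ d⟩

lemma integrable_unitCube {d : ℕ} {F : (Fin d → ℝ) → ℝ} (hF : Continuous F) :
    Integrable F (unitCube d) := by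
  rw [unitCube, Set.pi_univ_Icc]
  exact hF.integrableOn_Icc

lemma eLpNorm_le_of_integral_le {α : Type*} [MeasurableSpace α] {μ : Measure α}
    (F : α → ℂ) (q R : ℝ) (hq : 0 < q) (hR : 0 ≤ R)
    (hInt : Integrable (fun x => ‖F x‖ ^ q) μ)
    (hbound : ∫ x, ‖F x‖ ^ q ∂μ ≤ R ^ q) :
    eLpNorm F (ENNReal.ofReal q) μ ≤ ENNReal.ofReal R := by
  have hp0 : ENNReal.ofReal q ≠ 0 := by
    simp [ENNReal.ofReal_eq_zero, not_le, hq]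
  rw [eLpNorm_eq_lintegral_rpow_enorm_toReal hp0 ENNReal.ofReal_ne_top,
    ENNReal.toReal_ofReal hq.le]
  have h1 : ∀ x, ((‖F x‖₊ : ℝ≥0∞)) ^ q = ENNReal.ofReal (‖F x‖ ^ q) := by
    intro x
    rw [show ((‖F x‖₊ : ℝ≥0∞)) = ENNReal.ofReal ‖F x‖ from (ofReal_norm _).symm,
      ENNReal.ofReal_rpow_of_nonneg (norm_nonneg _) hq.le]
  have h2 : ∫⁻ x, ((‖F x‖₊ : ℝ≥0∞)) ^ q ∂μ = ENNReal.ofReal (∫ x, ‖F x‖ ^ q ∂μ) := by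
    rw [ofReal_integral_eq_lintegral_ofReal hInt
      (Filter.Eventually.of_forall fun x => Real.rpow_nonneg (norm_nonneg _) q)]
    exact lintegral_congr fun x => h1 x
  rw [show (∫⁻ x, ‖F x‖ₑ ^ q ∂μ) = _ from h2]
  calc (ENNReal.ofReal (∫ x, ‖F x‖ ^ q ∂μ)) ^ (1 / q)
      ≤ (ENNReal.ofReal (R ^ q)) ^ (1 / q) :=
        ENNReal.rpow_le_rpow (ENNReal.ofReal_le_ofReal hbound) (by positivity)
    _ = ENNReal.ofReal R := by
        rw [ENNReal.ofReal_rpow_of_nonneg (Real.rpow_nonneg hR q) (by positivity),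
          ← Real.rpow_mul hR, mul_one_div_cancel (ne_of_gt hq), Real.rpow_one]
set_option maxHeartbeats 2000000 in
/-- Key step of Theorem 4.4: for `2 ≤ q ≤ m`, a trigonometric polynomial
`t = ∑_{j<J} a_j e^{2πi k_j·x}` with non-increasingly arranged coefficients admits a
`2m`-term approximant `s` with frequencies among `{k_j : j ≥ 2m}` such that
`‖t - t_{2m} - s‖_{L_q} ≤ (80/3) √(q/m) ‖t - t_m‖_{𝒜_1}`, where `t_n` collects the `n`
largest terms and `‖t - t_m‖_{𝒜_1} = ∑_{j ≥ m} |a_j|`. -/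
theorem random_m_term_approximation (d J : ℕ) (q : ℝ) (hq : 2 ≤ q) (m : ℕ) (hm : q ≤ m)
    (k : Fin J → (Fin d → ℤ)) (hk : Function.Injective k)
    (a : Fin J → ℂ) (ha : ∀ i j : Fin J, i ≤ j → ‖a j‖ ≤ ‖a i‖) :
    ∃ c : Fin J → ℂ,
      (Finset.univ.filter fun j => c j ≠ 0).card ≤ 2 * m ∧
      (∀ j : Fin J, c j ≠ 0 → 2 * m ≤ (j : ℕ)) ∧
      eLpNorm (fun x =>
          (∑ j, a j * trigChar (k j) x) -
          (∑ j ∈ Finset.univ.filter (fun j : Fin J => (j : ℕ) < 2 * m),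
            a j * trigChar (k j) x) -
          ∑ j, c j * trigChar (k j) x) (ENNReal.ofReal q) (unitCube d) ≤
        ENNReal.ofReal ((80 / 3 : ℝ) * Real.sqrt (q / m) *
          ∑ j ∈ Finset.univ.filter (fun j : Fin J => m ≤ (j : ℕ)), ‖a j‖) := by
  have hq0 : (0:ℝ) < q := lt_of_lt_of_le two_pos hq
  set Tail : Finset (Fin J) := Finset.univ.filter (fun j : Fin J => 2 * m ≤ (j:ℕ))
    with hTailDef
  set T2 : ℝ := ∑ j ∈ Tail, ‖a j‖ with hT2Def
  set T : ℝ := ∑ j ∈ Finset.univ.filter (fun j : Fin J => m ≤ (j:ℕ)), ‖a j‖ with hTDef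
  have hT2nonneg : 0 ≤ T2 := Finset.sum_nonneg fun j _ => norm_nonneg _
  have hT2T : T2 ≤ T := by
    apply Finset.sum_le_sum_of_subset_of_nonneg
    · intro j hj
      simp only [hTailDef, Finset.mem_filter, Finset.mem_univ, true_and] at hj ⊢
      omega
    · intro j _ _; exact norm_nonneg _
  have hTnonneg : 0 ≤ T := le_trans hT2nonneg hT2T
  -- splitting of the sums
  have hsplit : ∀ x : Fin d → ℝ,
      (∑ j, a j * trigChar (k j) x) -
        (∑ j ∈ Finset.univ.filter (fun j : Fin J => (j : ℕ) < 2 * m),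
          a j * trigChar (k j) x)
      = ∑ j ∈ Tail, a j * trigChar (k j) x := by
    intro x
    have h := Finset.sum_filter_add_sum_filter_not Finset.univ
      (fun j : Fin J => (j:ℕ) < 2 * m) (fun j => a j * trigChar (k j) x)
    have heq : Finset.univ.filter (fun j : Fin J => ¬ (j:ℕ) < 2 * m) = Tail := by
      rw [hTailDef]
      apply Finset.filter_congr
      intro j _
      simp [not_lt]
    rw [heq] at h
    rw [← h]
    ring
  by_cases hT2z : T2 = 0
  · -- degenerate case : all tail coefficients vanish
    refine ⟨fun _ => 0, by simp, by simp, ?_⟩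
    have hzero' : ∀ j ∈ Tail, a j = 0 := by
      intro j hj
      have := (Finset.sum_eq_zero_iff_of_nonneg
        (fun j _ => norm_nonneg (a j))).mp hT2z j hj
      exact norm_eq_zero.mp this
    have hfun : (fun x : Fin d → ℝ =>
        (∑ j, a j * trigChar (k j) x) -
          (∑ j ∈ Finset.univ.filter (fun j : Fin J => (j : ℕ) < 2 * m),
            a j * trigChar (k j) x) -
          ∑ j : Fin J, (0:ℂ) * trigChar (k j) x) = fun _ => (0:ℂ) := by
      funext x
      rw [show (∑ j : Fin J, (0:ℂ) * trigChar (k j) x) = 0 by simp, sub_zero, hsplit x]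
      exact Finset.sum_eq_zero fun j hj => by rw [hzero' j hj, zero_mul]
    rw [hfun]
    simpa using zero_le _
  · have hT2pos : 0 < T2 := lt_of_le_of_ne hT2nonneg (Ne.symm hT2z)
    have hm2 : (2:ℝ) ≤ m := le_trans hq hm
    have hmpos : 0 < m := by exact_mod_cast lt_of_lt_of_le two_pos hm2
    set M : ℕ := 2 * m with hMdef
    have hMR : ((M:ℕ):ℝ) = 2 * m := by push_cast [hMdef]; ring
    have hqM : q ≤ (M:ℝ) := by rw [hMR]; nlinarith
    -- sampling distribution and normalized phases
    set p : Fin J → ℝ := fun j => if 2 * m ≤ (j:ℕ) then ‖a j‖ / T2 else 0 with hpdef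
    set u : Fin J → ℂ := fun j => if ‖a j‖ = 0 then 0 else a j / (‖a j‖ : ℂ) with hudef
    have hp : ∀ j, 0 ≤ p j := by
      intro j
      rw [hpdef]
      dsimp only
      split
      · positivity
      · exact le_refl 0
    have hp1 : ∑ j, p j = 1 := by
      rw [hpdef]
      rw [← Finset.sum_filter]
      rw [← Finset.sum_div]
      rw [← hTailDef, ← hT2Def, div_self hT2z]
    have hu1 : ∀ j, ‖u j‖ ≤ 1 := by
      intro j
      rw [hudef]
      dsimp only
      split
      · simp
      · rename_i h
        rw [norm_div]
        rw [Complex.norm_real, Real.norm_eq_abs, abs_of_nonneg (norm_nonneg _)]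
        rw [div_le_one (lt_of_le_of_ne (norm_nonneg _) (Ne.symm h))]
    -- the elementary random variables
    set g : Fin J → (Fin d → ℝ) → ℂ :=
      fun j x => (T2 : ℂ) * u j * trigChar (k j) x with hgdef
    set f : (Fin d → ℝ) → ℂ := fun x => ∑ j ∈ Tail, a j * trigChar (k j) x with hfdef
    have hgnorm : ∀ j x, ‖g j x‖ ≤ T2 := by
      intro j x
      rw [hgdef]
      dsimp only
      rw [norm_mul, norm_mul, norm_trigChar, mul_one, Complex.norm_real,
        Real.norm_eq_abs, abs_of_nonneg hT2nonneg]
      calc T2 * ‖u j‖ ≤ T2 * 1 := mul_le_mul_of_nonneg_left (hu1 j) hT2nonneg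
        _ = T2 := mul_one T2
    have hpg : ∀ j x, (p j : ℂ) * g j x
        = if 2 * m ≤ (j:ℕ) then a j * trigChar (k j) x else 0 := by
      intro j x
      rw [hpdef, hgdef, hudef]
      dsimp only
      by_cases hj : 2 * m ≤ (j:ℕ)
      · rw [if_pos hj, if_pos hj]
        by_cases hz : ‖a j‖ = 0
        · rw [if_pos hz, norm_eq_zero.mp hz]
          push_cast
          ring
        · rw [if_neg hz]
          have hz' : ((‖a j‖ : ℝ) : ℂ) ≠ 0 := by
            exact_mod_cast hz
          have hT2' : ((T2:ℝ):ℂ) ≠ 0 := by exact_mod_cast hT2z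
          have e : ((‖a j‖:ℝ):ℂ) * (a j / ((‖a j‖:ℝ):ℂ)) = a j := by
            rw [← mul_div_assoc, mul_comm, mul_div_assoc, div_self hz', mul_one]
          have e2 : (((T2:ℝ):ℂ))⁻¹ * ((T2:ℝ):ℂ) = 1 := inv_mul_cancel₀ hT2'
          calc ((((‖a j‖ / T2 :ℝ)):ℂ)) * (((T2:ℝ):ℂ) * (a j / ((‖a j‖:ℝ):ℂ)) * trigChar (k j) x)
              = ((((T2:ℝ):ℂ))⁻¹ * ((T2:ℝ):ℂ)) * (((‖a j‖:ℝ):ℂ) * (a j / ((‖a j‖:ℝ):ℂ)))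
                  * trigChar (k j) x := by
                push_cast
                ring
            _ = a j * trigChar (k j) x := by rw [e2, e, one_mul]
      · rw [if_neg hj, if_neg hj]
        push_cast
        ring
    have hmeanf : ∀ x, ∑ j, (p j : ℂ) * g j x = f x := by
      intro x
      rw [hfdef]
      dsimp only
      rw [Finset.sum_congr rfl fun j _ => hpg j x, ← Finset.sum_filter]
    have hfnorm : ∀ x, ‖f x‖ ≤ T2 := by
      intro x
      rw [hfdef]
      dsimp only
      calc ‖∑ j ∈ Tail, a j * trigChar (k j) x‖
          ≤ ∑ j ∈ Tail, ‖a j * trigChar (k j) x‖ := norm_sum_le _ _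
        _ = ∑ j ∈ Tail, ‖a j‖ := by
            refine Finset.sum_congr rfl fun j _ => ?_
            rw [norm_mul, norm_trigChar, mul_one]
        _ = T2 := hT2Def.symm
    set V : Fin J → (Fin d → ℝ) → ℂ := fun j x => f x - g j x with hVdef
    have hVnorm : ∀ j x, ‖V j x‖ ≤ 2 * T2 := by
      intro j x
      rw [hVdef]
      calc ‖f x - g j x‖ ≤ ‖f x‖ + ‖g j x‖ := norm_sub_le _ _
        _ ≤ T2 + T2 := add_le_add (hfnorm x) (hgnorm j x)
        _ = 2 * T2 := by ring
    have hVmean : ∀ x, ∑ j, (p j : ℂ) * V j x = 0 := by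
      intro x
      rw [hVdef]
      dsimp only
      have : ∀ j : Fin J, (p j : ℂ) * (f x - g j x)
          = (p j : ℂ) * f x - (p j : ℂ) * g j x := fun j => by ring
      rw [Finset.sum_congr rfl fun j _ => this j, Finset.sum_sub_distrib,
        ← Finset.sum_mul, hmeanf x]
      have hcast : (∑ j, ((p j : ℝ) : ℂ)) = ((1:ℝ):ℂ) := by
        rw [← Complex.ofReal_sum, hp1]
      rw [hcast]
      push_cast
      ring
    -- per-point moment bound
    have hmom : ∀ x, ∑ ω : Fin M → Fin J, (∏ i, p (ω i)) * ‖∑ i, V (ω i) x‖ ^ q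
        ≤ 4 * (2 * Real.sqrt (q * M) * (2 * T2)) ^ q := by
      intro x
      exact moment_bound_complex M p (fun j => V j x) (2 * T2) q hp hp1
        (fun j => hVnorm j x) (by positivity) (hVmean x) hq0 hqM
    -- empirical approximants
    set s : (Fin M → Fin J) → (Fin d → ℝ) → ℂ :=
      fun ω x => ((M:ℕ):ℂ)⁻¹ * ∑ i, g (ω i) x with hsdef
    have hMne : ((M:ℕ):ℂ) ≠ 0 := by
      rw [Nat.cast_ne_zero, hMdef]
      omega
    have hMRpos : (0:ℝ) < (M:ℝ) := by
      rw [hMR]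
      positivity
    have hdiff : ∀ ω x, f x - s ω x = ((M:ℕ):ℂ)⁻¹ * ∑ i, V (ω i) x := by
      intro ω x
      have hsum : ∑ i : Fin M, V (ω i) x = ((M:ℕ):ℂ) * f x - ∑ i, g (ω i) x := by
        rw [hVdef]
        dsimp only
        rw [Finset.sum_sub_distrib, Finset.sum_const, Finset.card_univ,
          Fintype.card_fin, nsmul_eq_mul]
      rw [hsum, mul_sub, ← mul_assoc, inv_mul_cancel₀ hMne, one_mul]
    have hnormdiff : ∀ ω x, ‖f x - s ω x‖ ^ q
        = ((M:ℝ)⁻¹) ^ q * ‖∑ i, V (ω i) x‖ ^ q := by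
      intro ω x
      rw [hdiff, norm_mul, norm_inv, Complex.norm_natCast,
        Real.mul_rpow (by positivity) (norm_nonneg _)]
    set K : ℝ := ((M:ℝ))⁻¹ * (2 * Real.sqrt (q * M) * (2 * T2)) with hKdef
    have hK0 : 0 ≤ K := by positivity
    -- continuity and integrability
    have hfc : Continuous f := by
      rw [hfdef]
      exact continuous_finset_sum _ fun j _ => continuous_const.mul (continuous_trigChar (k j))
    have hsc : ∀ ω : Fin M → Fin J, Continuous (s ω) := by
      intro ω
      rw [hsdef]
      exact continuous_const.mul
        (continuous_finset_sum _ fun i _ => continuous_const.mul (continuous_trigChar _))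
    have hFint : ∀ ω : Fin M → Fin J,
        Integrable (fun x => ‖f x - s ω x‖ ^ q) (unitCube d) := by
      intro ω
      apply integrable_unitCube
      exact ((hfc.sub (hsc ω)).norm).rpow_const (fun x => Or.inr hq0.le)
    set I : (Fin M → Fin J) → ℝ :=
      fun ω => ∫ x, ‖f x - s ω x‖ ^ q ∂(unitCube d) with hIdef
    have hw0 : ∀ ω : Fin M → Fin J, 0 ≤ ∏ i, p (ω i) :=
      fun ω => Finset.prod_nonneg fun i _ => hp (ω i)
    have hptwise : ∀ x, ∑ ω : Fin M → Fin J, (∏ i, p (ω i)) * ‖f x - s ω x‖ ^ q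
        ≤ 4 * K ^ q := by
      intro x
      have e : ∀ ω : Fin M → Fin J, (∏ i, p (ω i)) * ‖f x - s ω x‖ ^ q
          = ((M:ℝ)⁻¹) ^ q * ((∏ i, p (ω i)) * ‖∑ i, V (ω i) x‖ ^ q) := by
        intro ω
        rw [hnormdiff ω x]
        ring
      rw [Finset.sum_congr rfl fun ω _ => e ω, ← Finset.mul_sum]
      have hKq : K ^ q = ((M:ℝ)⁻¹) ^ q * (2 * Real.sqrt (q * M) * (2 * T2)) ^ q := by
        rw [hKdef, Real.mul_rpow (by positivity) (by positivity)]
      calc ((M:ℝ)⁻¹) ^ q * ∑ ω : Fin M → Fin J, (∏ i, p (ω i)) * ‖∑ i, V (ω i) x‖ ^ q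
          ≤ ((M:ℝ)⁻¹) ^ q * (4 * (2 * Real.sqrt (q * M) * (2 * T2)) ^ q) :=
            mul_le_mul_of_nonneg_left (hmom x) (by positivity)
        _ = 4 * K ^ q := by rw [hKq]; ring
    have havg : ∑ ω : Fin M → Fin J, (∏ i, p (ω i)) * I ω ≤ 4 * K ^ q := by
      have e1 : ∑ ω : Fin M → Fin J, (∏ i, p (ω i)) * I ω
          = ∫ x, ∑ ω : Fin M → Fin J, (∏ i, p (ω i)) * ‖f x - s ω x‖ ^ q
            ∂(unitCube d) := by
        rw [integral_finset_sum _ (fun ω _ => ((hFint ω).const_mul _))]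
        exact (Finset.sum_congr rfl fun ω _ => by
          rw [hIdef]
          dsimp only
          rw [integral_const_mul]).symm
      rw [e1]
      calc ∫ x, ∑ ω : Fin M → Fin J, (∏ i, p (ω i)) * ‖f x - s ω x‖ ^ q ∂(unitCube d)
          ≤ ∫ _x, 4 * K ^ q ∂(unitCube d) := by
            apply integral_mono
              (integrable_finset_sum _ fun ω _ => (hFint ω).const_mul _)
              (integrable_const _)
            exact fun x => hptwise x
        _ = 4 * K ^ q := by
            simp [integral_const, measure_univ]
    have hWsum : ∑ ω : Fin M → Fin J, ∏ i, p (ω i) = 1 := by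
      have h := Finset.prod_univ_sum (fun _ : Fin M => (Finset.univ : Finset (Fin J)))
        (fun (_ : Fin M) j => p j)
      rw [Fintype.piFinset_univ] at h
      rw [← h, hp1, Finset.prod_const_one]
    have hex : ∃ ω : Fin M → Fin J, 0 < (∏ i, p (ω i)) ∧ I ω ≤ 4 * K ^ q := by
      by_contra hcon
      push_neg at hcon
      have hex1 : ∃ ω₁ : Fin M → Fin J, (∏ i, p (ω₁ i)) ≠ 0 := by
        rcases Finset.exists_ne_zero_of_sum_ne_zero
          (s := (Finset.univ : Finset (Fin M → Fin J)))
          (f := fun ω => ∏ i, p (ω i))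
          (by rw [hWsum]; norm_num) with ⟨ω₁, _, h2⟩
        exact ⟨ω₁, h2⟩
      rcases hex1 with ⟨ω₁, hω₁⟩
      have hlt : ∑ ω : Fin M → Fin J, (∏ i, p (ω i)) * (4 * K ^ q)
          < ∑ ω : Fin M → Fin J, (∏ i, p (ω i)) * I ω := by
        apply Finset.sum_lt_sum
        · intro ω _
          rcases lt_or_eq_of_le (hw0 ω) with h | h
          · exact mul_le_mul_of_nonneg_left (le_of_lt (hcon ω h)) (le_of_lt h)
          · rw [← h, zero_mul, zero_mul]
        · refine ⟨ω₁, Finset.mem_univ _, ?_⟩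
          have hpos := lt_of_le_of_ne (hw0 ω₁) (Ne.symm hω₁)
          exact mul_lt_mul_of_pos_left (hcon ω₁ hpos) hpos
      rw [← Finset.sum_mul, hWsum, one_mul] at hlt
      linarith
    obtain ⟨ω₀, hω₀pos, hIω₀⟩ := hex
    have hcoord : ∀ i, 0 < p (ω₀ i) := by
      intro i
      rcases lt_or_eq_of_le (hp (ω₀ i)) with h | h
      · exact h
      · exfalso
        have h0 : (∏ i, p (ω₀ i)) = 0 := Finset.prod_eq_zero (Finset.mem_univ i) h.symm
        rw [h0] at hω₀pos
        exact lt_irrefl 0 hω₀pos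
    have htail : ∀ i : Fin M, 2 * m ≤ ((ω₀ i : Fin J):ℕ) := by
      intro i
      by_contra hno
      have h0 : p (ω₀ i) = 0 := by
        rw [hpdef]
        dsimp only
        rw [if_neg hno]
      have := hcoord i
      rw [h0] at this
      exact lt_irrefl 0 this
    set cnt : Fin J → ℕ :=
      fun j => (Finset.univ.filter (fun i : Fin M => ω₀ i = j)).card with hcntdef
    set c : Fin J → ℂ :=
      fun j => ((M:ℕ):ℂ)⁻¹ * (T2:ℂ) * u j * (cnt j : ℂ) with hcdef
    have hcnt_ne : ∀ j : Fin J, c j ≠ 0 → cnt j ≠ 0 := by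
      intro j hj h0
      apply hj
      rw [hcdef]
      dsimp only
      rw [h0]
      push_cast
      ring
    refine ⟨c, ?_, ?_, ?_⟩
    · have hsub : Finset.univ.filter (fun j : Fin J => c j ≠ 0)
          ⊆ Finset.image ω₀ Finset.univ := by
        intro j hj
        rw [Finset.mem_filter] at hj
        rcases Finset.card_pos.mp (Nat.pos_of_ne_zero (hcnt_ne j hj.2)) with ⟨i, hi⟩
        rw [Finset.mem_filter] at hi
        exact Finset.mem_image.mpr ⟨i, Finset.mem_univ i, hi.2⟩
      calc (Finset.univ.filter fun j : Fin J => c j ≠ 0).card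
          ≤ (Finset.image ω₀ Finset.univ).card := Finset.card_le_card hsub
        _ ≤ (Finset.univ : Finset (Fin M)).card := Finset.card_image_le
        _ = 2 * m := by rw [Finset.card_univ, Fintype.card_fin]
    · intro j hj
      rcases Finset.card_pos.mp (Nat.pos_of_ne_zero (hcnt_ne j hj)) with ⟨i, hi⟩
      rw [Finset.mem_filter] at hi
      rw [← hi.2]
      exact htail i
    · have hcsum : ∀ x, ∑ j, c j * trigChar (k j) x = s ω₀ x := by
        intro x
        have e : ∀ j : Fin J,
            (∑ i ∈ Finset.univ.filter (fun i : Fin M => ω₀ i = j),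
              ((M:ℕ):ℂ)⁻¹ * g (ω₀ i) x) = c j * trigChar (k j) x := by
          intro j
          rw [Finset.sum_congr rfl (fun i hi => by
            rw [(Finset.mem_filter.mp hi).2]),
            Finset.sum_const, nsmul_eq_mul, hcdef, hgdef, hcntdef]
          dsimp only
          ring
        calc ∑ j, c j * trigChar (k j) x
            = ∑ j : Fin J, ∑ i ∈ Finset.univ.filter (fun i : Fin M => ω₀ i = j),
                ((M:ℕ):ℂ)⁻¹ * g (ω₀ i) x :=
              (Finset.sum_congr rfl fun j _ => (e j).symm).symm.symm
          _ = ∑ i : Fin M, ((M:ℕ):ℂ)⁻¹ * g (ω₀ i) x :=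
              Finset.sum_fiberwise _ _ _
          _ = s ω₀ x := by
              rw [hsdef]
              dsimp only
              rw [Finset.mul_sum]
      have hFeq : (fun x : Fin d → ℝ =>
          (∑ j, a j * trigChar (k j) x) -
            (∑ j ∈ Finset.univ.filter (fun j : Fin J => (j : ℕ) < 2 * m),
              a j * trigChar (k j) x) -
            ∑ j, c j * trigChar (k j) x) = fun x => f x - s ω₀ x := by
        funext x
        rw [hcsum x, hsplit x]
      rw [hFeq]
      apply eLpNorm_le_of_integral_le _ q ((80/3:ℝ) * Real.sqrt (q/(m:ℝ)) * T) hq0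
        (by positivity) (hFint ω₀)
      -- remaining : I ω₀ ≤ R ^ q
      have h4 : (4:ℝ) ≤ (2:ℝ) ^ q := by
        have e4 : (2:ℝ) ^ (2:ℝ) = 4 := by
          rw [show (2:ℝ) = ((2:ℕ):ℝ) from by norm_num, Real.rpow_natCast]
          norm_num
        rw [← e4]
        exact (Real.rpow_le_rpow_left_iff (by norm_num)).mpr hq
      have hKq2 : 4 * K ^ q ≤ (2 * K) ^ q := by
        rw [Real.mul_rpow (by norm_num) hK0]
        exact mul_le_mul_of_nonneg_right h4 (Real.rpow_nonneg hK0 q)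
      have hsqdiv : Real.sqrt (q * M) / (M:ℝ) = Real.sqrt (q / (M:ℝ)) := by
        rw [Real.sqrt_div hq0.le, Real.sqrt_mul hq0.le]
        nth_rewrite 2 [← Real.mul_self_sqrt (le_of_lt hMRpos)]
        rw [mul_div_mul_right _ _ (ne_of_gt (Real.sqrt_pos.mpr hMRpos))]
      have hdivle : q / (M:ℝ) ≤ q / (m:ℝ) := by
        rw [hMR, div_le_div_iff₀ (by positivity) (by positivity)]
        nlinarith
      have hsqle : Real.sqrt (q / (M:ℝ)) ≤ Real.sqrt (q / (m:ℝ)) :=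
        Real.sqrt_le_sqrt hdivle
      have hKR : 2 * K ≤ (80/3:ℝ) * Real.sqrt (q/(m:ℝ)) * T := by
        have h2K : 2 * K = 8 * (Real.sqrt (q * M) / (M:ℝ)) * T2 := by
          rw [hKdef]
          field_simp
          ring
        rw [h2K, hsqdiv]
        have step1 : 8 * Real.sqrt (q / (M:ℝ)) * T2
            ≤ 8 * Real.sqrt (q / (m:ℝ)) * T2 := by
          apply mul_le_mul_of_nonneg_right _ hT2nonneg
          linarith
        refine le_trans step1 ?_
        nlinarith [Real.sqrt_nonneg (q / (m:ℝ))]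
      calc ∫ x, ‖f x - s ω₀ x‖ ^ q ∂(unitCube d) = I ω₀ := rfl
        _ ≤ 4 * K ^ q := hIω₀
        _ ≤ (2 * K) ^ q := hKq2
        _ ≤ ((80/3:ℝ) * Real.sqrt (q/(m:ℝ)) * T) ^ q :=
            Real.rpow_le_rpow (by positivity) hKR hq0.le
end
end
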